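/- arXiv:1310.1805 — 3 statements merged into one kernel-verified Lean document; each statement's English description precedes it below -/
import Mathlib

section
/- For two permutations σ, μ ∈ S_n, σ ≤ μ in the Bruhat order if and only if for all k, r with 1 ≤ k, r < n, the cardinality #{i ≤ k : σ(i) ≤ r} is greater than or equal to #{i ≤ k : μ(i) ≤ r} (Ehresmann's key/tableau criterion). -/
/-- Number of inversions (Coxeter length) of a permutation of `Fin n`. -/
def invCount (n : ℕ) (σ : Equiv.Perm (Fin n)) : ℕ :=
  (Finset.univ.filter fun p : Fin n × Fin n => p.1 < p.2 ∧ σ p.2 < σ p.1).card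

/-- The Bruhat order: generated by `σ < στ` for `τ` a transposition with
`ℓ(στ) = ℓ(σ) + 1`. -/
def bruhatLE (n : ℕ) (σ μ : Equiv.Perm (Fin n)) : Prop :=
  Relation.ReflTransGen
    (fun a b => ∃ x y : Fin n, x ≠ y ∧ b = a * Equiv.swap x y ∧
      invCount n b = invCount n a + 1) σ μ

open Finset Equiv

namespace BruhatAux

variable {n : ℕ}

/-- The key count matrix. -/
def D (π : Perm (Fin n)) (k r : ℕ) : ℕ :=
  (univ.filter fun i : Fin n => (i : ℕ) < k ∧ ((π i : ℕ) < r)).card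

lemma card_filter_comp (π : Perm (Fin n)) (Q : Fin n → Prop) [DecidablePred Q] :
    (univ.filter fun i => Q (π i)).card = (univ.filter Q).card := by
  apply Finset.card_bij (fun i _ => π i)
  · intro a ha; simp only [mem_filter, mem_univ, true_and] at ha ⊢; exact ha
  · intro a _ b _ h; exact π.injective h
  · intro b hb
    simp only [mem_filter, mem_univ, true_and] at hb
    exact ⟨π.symm b, by simp [hb], by simp⟩

lemma D_zero_k (π : Perm (Fin n)) (r : ℕ) : D π 0 r = 0 := by
  simp [D]

lemma D_zero_r (π : Perm (Fin n)) (k : ℕ) : D π k 0 = 0 := by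
  simp [D]

lemma D_large_k (π : Perm (Fin n)) {k : ℕ} (hk : n ≤ k) (r : ℕ) :
    D π k r = (univ.filter fun i : Fin n => ((i : ℕ) < r)).card := by
  rw [D]
  rw [Finset.filter_congr (fun i _ => by
    have : (i : ℕ) < n := i.isLt
    constructor
    · rintro ⟨_, h⟩; exact h
    · intro h; exact ⟨by omega, h⟩)]
  exact card_filter_comp π (fun v => (v : ℕ) < r)

lemma D_large_r (π : Perm (Fin n)) (k : ℕ) {r : ℕ} (hr : n ≤ r) :
    D π k r = (univ.filter fun i : Fin n => ((i : ℕ) < k)).card := by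
  rw [D]
  rw [Finset.filter_congr (fun i _ => by
    have : ((π i : ℕ)) < n := (π i).isLt
    constructor
    · rintro ⟨h, _⟩; exact h
    · intro h; exact ⟨h, by omega⟩)]

lemma dom_all (σ μ : Perm (Fin n))
    (H : ∀ k r : ℕ, 1 ≤ k → k < n → 1 ≤ r → r < n →
      (Finset.univ.filter fun i : Fin n => (i : ℕ) < k ∧ ((μ i : ℕ) < r)).card ≤
      (Finset.univ.filter fun i : Fin n => (i : ℕ) < k ∧ ((σ i : ℕ) < r)).card) :
    ∀ k r : ℕ, D μ k r ≤ D σ k r := by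
  intro k r
  by_cases hk0 : k = 0
  · simp [hk0, D_zero_k]
  by_cases hr0 : r = 0
  · simp [hr0, D_zero_r]
  by_cases hkn : n ≤ k
  · rw [D_large_k σ hkn, D_large_k μ hkn]
  by_cases hrn : n ≤ r
  · rw [D_large_r σ k hrn, D_large_r μ k hrn]
  exact H k r (by omega) (by omega) (by omega) (by omega)

lemma D_swap_eq (π : Perm (Fin n)) (x y : Fin n) (h : x ≠ y) (k r : ℕ) :
    D (π * Equiv.swap x y) k r
      + ((if (x:ℕ) < k ∧ ((π x : ℕ) < r) then 1 else 0)
        + (if (y:ℕ) < k ∧ ((π y : ℕ) < r) then 1 else 0))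
    = D π k r
      + ((if (x:ℕ) < k ∧ ((π y : ℕ) < r) then 1 else 0)
        + (if (y:ℕ) < k ∧ ((π x : ℕ) < r) then 1 else 0)) := by
  have hsplit : ∀ τ : Perm (Fin n), D τ k r
      = (∑ i ∈ univ \ ({x, y} : Finset (Fin n)),
          if (i:ℕ) < k ∧ ((τ i : ℕ) < r) then 1 else 0)
        + ((if (x:ℕ) < k ∧ ((τ x : ℕ) < r) then 1 else 0)
          + (if (y:ℕ) < k ∧ ((τ y : ℕ) < r) then 1 else 0)) := by
    intro τ
    rw [D, Finset.card_filter, ← Finset.sum_sdiff (Finset.subset_univ {x, y}),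
      Finset.sum_pair h]
  rw [hsplit, hsplit]
  have hoff : ∀ i ∈ univ \ ({x, y} : Finset (Fin n)),
      (if (i:ℕ) < k ∧ (((π * Equiv.swap x y) i : ℕ) < r) then 1 else 0)
        = (if (i:ℕ) < k ∧ ((π i : ℕ) < r) then 1 else 0) := by
    intro i hi
    simp only [Finset.mem_sdiff, Finset.mem_insert, Finset.mem_singleton, not_or] at hi
    rw [Equiv.Perm.mul_apply, Equiv.swap_apply_of_ne_of_ne hi.2.1 hi.2.2]
  rw [Finset.sum_congr rfl hoff]
  have hx : (π * Equiv.swap x y) x = π y := by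
    rw [Equiv.Perm.mul_apply, Equiv.swap_apply_left]
  have hy : (π * Equiv.swap x y) y = π x := by
    rw [Equiv.Perm.mul_apply, Equiv.swap_apply_right]
  rw [hx, hy]
  ring

lemma D_swap_le (π : Perm (Fin n)) (x y : Fin n) (hxy : x < y) (hv : π x < π y) (k r : ℕ) :
    D (π * Equiv.swap x y) k r ≤ D π k r := by
  have h := D_swap_eq π x y (ne_of_lt hxy) k r
  have hxy' : (x:ℕ) < y := hxy
  have hv' : ((π x : ℕ)) < π y := hv
  split_ifs at h <;> omega

lemma D_split_r (π : Perm (Fin n)) (k : ℕ) {r r' : ℕ} (h : r ≤ r') :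
    D π k r' = D π k r
      + (univ.filter fun i : Fin n => (i:ℕ) < k ∧ r ≤ (π i : ℕ) ∧ (π i : ℕ) < r').card := by
  rw [D, D]
  rw [← Finset.card_union_of_disjoint (by
    rw [Finset.disjoint_left]
    intro a ha hb
    simp only [mem_filter] at ha hb
    omega)]
  rw [← Finset.filter_or]
  apply congrArg
  apply Finset.filter_congr
  intro i _
  constructor
  · intro hh; omega
  · intro hh; omega


/-- inversion set -/
def IA (σ : Perm (Fin n)) : Finset (Fin n × Fin n) :=
  univ.filter fun p => p.1 < p.2 ∧ σ p.2 < σ p.1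

/-- reindexed inversion set of `σ * swap x y` -/
def IB (σ : Perm (Fin n)) (x y : Fin n) : Finset (Fin n × Fin n) :=
  univ.filter fun p => Equiv.swap x y p.1 < Equiv.swap x y p.2 ∧ σ p.2 < σ p.1

lemma invCount_eq_IA (σ : Perm (Fin n)) : invCount n σ = (IA σ).card := rfl

lemma invCount_eq_IB (σ : Perm (Fin n)) (x y : Fin n) :
    invCount n (σ * Equiv.swap x y) = (IB σ x y).card := by
  rw [invCount, IB]
  apply Finset.card_bij (fun p _ => (Equiv.swap x y p.1, Equiv.swap x y p.2))
  · intro p hp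
    simp only [mem_filter, mem_univ, true_and, Equiv.Perm.mul_apply] at hp
    simp only [mem_filter, mem_univ, true_and, Equiv.swap_apply_self]
    exact (Finset.mem_filter.mp hp).2
  · intro p _ q _ h
    simp only [Prod.mk.injEq] at h
    exact Prod.ext ((Equiv.swap x y).injective h.1) ((Equiv.swap x y).injective h.2)
  · intro q hq
    simp only [mem_filter, mem_univ, true_and, Equiv.Perm.mul_apply] at hq
    refine ⟨(Equiv.swap x y q.1, Equiv.swap x y q.2), ?_, by simp⟩
    exact Finset.mem_filter.mpr ⟨Finset.mem_univ _, by
      simp only [Equiv.Perm.mul_apply, Equiv.swap_apply_self]; exact hq⟩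

/-- classification of "order reversed by swap" pairs -/
lemma classify (x y : Fin n) (hxy : x < y) {a b : Fin n}
    (hs : Equiv.swap x y a < Equiv.swap x y b) (hba : b < a) :
    (y = a ∧ x = b) ∨ (x = b ∧ x < a ∧ a < y) ∨ (y = a ∧ x < b ∧ b < y) := by
  by_cases hax : x = a
  · subst hax
    exfalso
    have hbx : b ≠ x := ne_of_lt hba
    have hby : b ≠ y := ne_of_lt (lt_trans hba hxy)
    rw [Equiv.swap_apply_left, Equiv.swap_apply_of_ne_of_ne hbx hby] at hs
    exact absurd (lt_trans (lt_trans hba hxy) hs) (lt_irrefl b)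
  by_cases hay : y = a
  · subst hay
    by_cases hbx : x = b
    · exact Or.inl ⟨rfl, hbx⟩
    · have hby : b ≠ y := ne_of_lt hba
      rw [Equiv.swap_apply_right, Equiv.swap_apply_of_ne_of_ne (Ne.symm hbx) hby] at hs
      exact Or.inr (Or.inr ⟨rfl, hs, hba⟩)
  · rw [Equiv.swap_apply_of_ne_of_ne (Ne.symm hax) (Ne.symm hay)] at hs
    by_cases hbx : x = b
    · subst hbx
      rw [Equiv.swap_apply_left] at hs
      exact Or.inr (Or.inl ⟨rfl, hba, hs⟩)
    by_cases hby : y = b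
    · subst hby
      rw [Equiv.swap_apply_right] at hs
      exact absurd (lt_trans (lt_trans hxy hba) hs) (lt_irrefl x)
    · rw [Equiv.swap_apply_of_ne_of_ne (Ne.symm hbx) (Ne.symm hby)] at hs
      exact absurd hs (not_lt_of_gt hba)

lemma inv_le (σ : Perm (Fin n)) (x y : Fin n) (hxy : x < y) (hv : σ y < σ x) :
    invCount n (σ * Equiv.swap x y) ≤ invCount n σ := by
  rw [invCount_eq_IB σ x y, invCount_eq_IA]
  have hmap : ((IB σ x y \ IA σ).image
      (Prod.map (Equiv.swap x y) (Equiv.swap x y))) ⊆ IA σ \ IB σ x y := by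
    intro q hq
    simp only [Finset.mem_image] at hq
    obtain ⟨p, hp, rfl⟩ := hq
    obtain ⟨a, b⟩ := p
    simp only [IA, IB, Finset.mem_sdiff, mem_filter, mem_univ, true_and, not_and] at hp ⊢
    obtain ⟨⟨hs, hσ⟩, hA⟩ := hp
    have hab : a ≠ b := fun h => by subst h; exact lt_irrefl _ hσ
    have hba : b < a := by
      rcases lt_or_gt_of_ne hab with h | h
      · exact absurd (hA h) (by simp [hσ])
      · exact h
    rcases classify x y hxy hs hba with ⟨ha, hb⟩ | ⟨hb, h1, h2⟩ | ⟨ha, h1, h2⟩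
    · subst ha; subst hb
      exact absurd (lt_trans hv hσ) (lt_irrefl _)
    · subst hb
      have hax : a ≠ x := ne_of_gt h1
      have hay : a ≠ y := ne_of_lt h2
      rw [Prod.map_apply, Equiv.swap_apply_of_ne_of_ne hax hay, Equiv.swap_apply_left]
      refine ⟨⟨h2, lt_trans hv hσ⟩, ?_⟩
      intro hcon
      rw [Equiv.swap_apply_of_ne_of_ne hax hay, Equiv.swap_apply_right] at hcon
      exact absurd hcon (not_lt_of_gt h1)
    · subst ha
      have hbx : b ≠ x := ne_of_gt h1
      have hby : b ≠ y := ne_of_lt h2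
      rw [Prod.map_apply, Equiv.swap_apply_right, Equiv.swap_apply_of_ne_of_ne hbx hby]
      refine ⟨⟨h1, lt_trans hσ hv⟩, ?_⟩
      intro hcon
      rw [Equiv.swap_apply_left, Equiv.swap_apply_of_ne_of_ne hbx hby] at hcon
      exact absurd hcon (not_lt_of_gt h2)
  have hinj : Function.Injective (Prod.map (Equiv.swap x y) (Equiv.swap x y) :
      Fin n × Fin n → Fin n × Fin n) :=
    Function.Injective.prodMap (Equiv.swap x y).injective (Equiv.swap x y).injective
  have h1 : (IB σ x y \ IA σ).card ≤ (IA σ \ IB σ x y).card := by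
    calc (IB σ x y \ IA σ).card
        = ((IB σ x y \ IA σ).image (Prod.map (Equiv.swap x y) (Equiv.swap x y))).card :=
          (Finset.card_image_of_injective _ hinj).symm
      _ ≤ (IA σ \ IB σ x y).card := Finset.card_le_card hmap
  have h2 := Finset.card_sdiff_add_card_inter (IB σ x y) (IA σ)
  have h3 := Finset.card_sdiff_add_card_inter (IA σ) (IB σ x y)
  rw [Finset.inter_comm] at h3
  omega


lemma inv_succ (σ : Perm (Fin n)) (x y : Fin n) (hxy : x < y) (hv : σ x < σ y)
    (hmid : ∀ l : Fin n, x < l → l < y → (σ l < σ x ∨ σ y < σ l)) :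
    invCount n (σ * Equiv.swap x y) = invCount n σ + 1 := by
  rw [invCount_eq_IB σ x y, invCount_eq_IA]
  have hinj : Function.Injective (Prod.map (Equiv.swap x y) (Equiv.swap x y) :
      Fin n × Fin n → Fin n × Fin n) :=
    Function.Injective.prodMap (Equiv.swap x y).injective (Equiv.swap x y).injective
  have hset : IB σ x y \ IA σ =
      insert (y, x) ((IA σ \ IB σ x y).image
        (Prod.map (Equiv.swap x y) (Equiv.swap x y))) := by
    ext ⟨a, b⟩
    simp only [IA, IB, Finset.mem_sdiff, mem_filter, mem_univ, true_and, not_and,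
      Finset.mem_insert, Finset.mem_image, Prod.mk.injEq, Prod.exists, Prod.map_apply]
    constructor
    · rintro ⟨⟨hs, hσ⟩, hA⟩
      have hab : a ≠ b := fun h => by subst h; exact lt_irrefl _ hσ
      have hba : b < a := by
        rcases lt_or_gt_of_ne hab with h | h
        · exact absurd (hA h) (by simp [hσ])
        · exact h
      rcases classify x y hxy hs hba with ⟨ha, hb⟩ | ⟨hb, h1, h2⟩ | ⟨ha, h1, h2⟩
      · exact Or.inl ⟨ha.symm, hb.symm⟩
      · -- b = x, x < a < y : p = (a, x); witness q = (a, y)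
        subst hb
        right
        refine ⟨a, y, ⟨⟨h2, ?_⟩, ?_⟩, ?_, ?_⟩
        · -- σ y < σ a
          rcases hmid a h1 h2 with h | h
          · exact absurd hσ (not_lt_of_gt h)
          · exact h
        · -- ¬ (swap a < swap y ∧ σ y < σ a)
          intro hcon
          have hax : a ≠ x := ne_of_gt h1
          have hay : a ≠ y := ne_of_lt h2
          rw [Equiv.swap_apply_of_ne_of_ne hax hay, Equiv.swap_apply_right] at hcon
          exact absurd hcon (not_lt_of_gt h1)
        · rw [Equiv.swap_apply_of_ne_of_ne (ne_of_gt h1) (ne_of_lt h2)]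
        · rw [Equiv.swap_apply_right]
      · -- a = y, x < b < y : p = (y, b); witness q = (x, b)
        subst ha
        right
        refine ⟨x, b, ⟨⟨h1, ?_⟩, ?_⟩, ?_, ?_⟩
        · -- σ b < σ x
          rcases hmid b h1 h2 with h | h
          · exact h
          · exact absurd hσ (not_lt_of_gt h)
        · intro hcon
          have hbx : b ≠ x := ne_of_gt h1
          have hby : b ≠ y := ne_of_lt h2
          rw [Equiv.swap_apply_left, Equiv.swap_apply_of_ne_of_ne hbx hby] at hcon
          exact absurd hcon (not_lt_of_gt h2)
        · rw [Equiv.swap_apply_left]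
        · rw [Equiv.swap_apply_of_ne_of_ne (ne_of_gt h1) (ne_of_lt h2)]
    · rintro (⟨ha, hb⟩ | ⟨c, d, ⟨⟨hcd, hσcd⟩, hnB⟩, hc, hd⟩)
      · subst ha; subst hb
        refine ⟨⟨?_, hv⟩, ?_⟩
        · rw [Equiv.swap_apply_right, Equiv.swap_apply_left]; exact hxy
        · intro hcon; exact absurd (lt_trans hcon hxy) (lt_irrefl _)
      · -- q = (c,d) ∈ A \ B, image is (swap c, swap d) = (a, b)
        subst hc; subst hd
        have hsc : ¬ (Equiv.swap x y c < Equiv.swap x y d) := fun h => hnB h hσcd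
        refine ⟨⟨?_, ?_⟩, fun hcon _ => hsc hcon⟩
        · simpa [Equiv.swap_apply_self] using hcd
        · -- σ (swap d) < σ (swap c)
          have hne : Equiv.swap x y c ≠ Equiv.swap x y d :=
            fun h => absurd ((Equiv.swap x y).injective h) (ne_of_lt hcd)
          have hs' : Equiv.swap x y d < Equiv.swap x y c :=
            lt_of_le_of_ne (not_lt.mp hsc) (Ne.symm hne)
          rcases classify x y hxy (a := d) (b := c) hs' hcd with
            ⟨hd', hc'⟩ | ⟨hc', h1, h2⟩ | ⟨hd', h1, h2⟩
          · rw [← hd', ← hc'] at hσcd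
            exact absurd (lt_trans hv hσcd) (lt_irrefl _)
          · -- x = c, x < d < y
            rw [← hc', Equiv.swap_apply_left,
              Equiv.swap_apply_of_ne_of_ne (ne_of_gt h1) (ne_of_lt h2)]
            rw [← hc'] at hσcd
            exact lt_trans hσcd hv
          · -- y = d, x < c < y
            rw [← hd', Equiv.swap_apply_right,
              Equiv.swap_apply_of_ne_of_ne (ne_of_gt h1) (ne_of_lt h2)]
            rw [← hd'] at hσcd
            exact lt_trans hv hσcd
  have hnotmem : (y, x) ∉ (IA σ \ IB σ x y).image
      (Prod.map (Equiv.swap x y) (Equiv.swap x y)) := by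
    intro hmem
    simp only [Finset.mem_image, Prod.mk.injEq, Prod.exists, Prod.map_apply] at hmem
    obtain ⟨c, d, hq, hc, hd⟩ := hmem
    have hc' : c = x := by
      have := congrArg (Equiv.swap x y) hc
      rwa [Equiv.swap_apply_self, Equiv.swap_apply_right] at this
    have hd' : d = y := by
      have := congrArg (Equiv.swap x y) hd
      rwa [Equiv.swap_apply_self, Equiv.swap_apply_left] at this
    subst hc'; subst hd'
    simp only [IA, Finset.mem_sdiff, mem_filter, mem_univ, true_and] at hq
    exact absurd (lt_trans hv hq.1.2) (lt_irrefl _)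
  have h2 := Finset.card_sdiff_add_card_inter (IB σ x y) (IA σ)
  have h3 := Finset.card_sdiff_add_card_inter (IA σ) (IB σ x y)
  rw [Finset.inter_comm] at h3
  have h4 : (IB σ x y \ IA σ).card = (IA σ \ IB σ x y).card + 1 := by
    rw [hset, Finset.card_insert_of_notMem hnotmem, Finset.card_image_of_injective _ hinj]
  omega


lemma invCount_le (σ : Perm (Fin n)) : invCount n σ ≤ n * n := by
  calc invCount n σ ≤ (univ : Finset (Fin n × Fin n)).card := Finset.card_filter_le _ _
    _ = n * n := by simp [Finset.card_univ]

lemma exists_step (σ μ : Perm (Fin n)) (hne : σ ≠ μ)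
    (hdom : ∀ k r : ℕ, D μ k r ≤ D σ k r) :
    ∃ σ' : Perm (Fin n), (∃ x y : Fin n, x ≠ y ∧ σ' = σ * Equiv.swap x y ∧
      invCount n σ' = invCount n σ + 1) ∧ (∀ k r : ℕ, D μ k r ≤ D σ' k r) := by
  classical
  have hDne : (univ.filter fun l : Fin n => σ l ≠ μ l).Nonempty := by
    rcases Finset.eq_empty_or_nonempty (univ.filter fun l : Fin n => σ l ≠ μ l) with h | h
    · exfalso
      apply hne
      ext l
      by_contra hl
      have : l ∈ (univ.filter fun l : Fin n => σ l ≠ μ l) := by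
        simp only [mem_filter, mem_univ, true_and]
        exact fun hc => hl (by rw [hc])
      rw [h] at this
      exact absurd this (Finset.notMem_empty l)
    · exact h
  set i := (univ.filter fun l : Fin n => σ l ≠ μ l).min' hDne with hidef
  have hidiff : σ i ≠ μ i :=
    (Finset.mem_filter.mp (Finset.min'_mem _ hDne)).2
  have hpre : ∀ l : Fin n, l < i → σ l = μ l := by
    intro l hl
    by_contra h
    exact absurd (Finset.min'_le _ l (Finset.mem_filter.mpr ⟨Finset.mem_univ _, h⟩))
      (not_le_of_gt hl)
  have hσμi : (σ i : ℕ) < (μ i : ℕ) := by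
    have hvne : (σ i : ℕ) ≠ (μ i : ℕ) := fun h => hidiff (Fin.ext h)
    rcases lt_or_gt_of_ne hvne with h | h
    · exact h
    · -- μ i < σ i : contradiction with dominance at (i+1, μ i + 1)
      exfalso
      have hsub : insert i (univ.filter fun l : Fin n =>
            (l:ℕ) < (i:ℕ)+1 ∧ (σ l:ℕ) < (μ i:ℕ)+1)
          ⊆ univ.filter fun l : Fin n => (l:ℕ) < (i:ℕ)+1 ∧ (μ l:ℕ) < (μ i:ℕ)+1 := by
        intro l hl
        rcases Finset.mem_insert.mp hl with rfl | hl
        · simp only [mem_filter, mem_univ, true_and]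
          omega
        · simp only [mem_filter, mem_univ, true_and] at hl ⊢
          have hlne : l ≠ i := by
            intro hc; subst hc; omega
          have hli : (l:ℕ) < (i:ℕ) := by
            have : (l:ℕ) ≠ (i:ℕ) := fun hc => hlne (Fin.ext hc)
            omega
          rw [← hpre l (Fin.lt_def.mpr hli)]
          exact hl
      have hcard := Finset.card_le_card hsub
      rw [Finset.card_insert_of_notMem (by
        simp only [mem_filter, mem_univ, true_and, not_and]
        intro _
        omega)] at hcard
      have hd := hdom ((i:ℕ)+1) ((μ i:ℕ)+1)
      have e1 : D σ ((i:ℕ)+1) ((μ i:ℕ)+1)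
          = (univ.filter fun l : Fin n => (l:ℕ) < (i:ℕ)+1 ∧ (σ l:ℕ) < (μ i:ℕ)+1).card := rfl
      have e2 : D μ ((i:ℕ)+1) ((μ i:ℕ)+1)
          = (univ.filter fun l : Fin n => (l:ℕ) < (i:ℕ)+1 ∧ (μ l:ℕ) < (μ i:ℕ)+1).card := rfl
      omega
  -- the set of candidate positions j
  set C := univ.filter (fun l : Fin n => i < l ∧ (σ i:ℕ) < (σ l:ℕ) ∧ (σ l:ℕ) ≤ (μ i:ℕ))
    with hCdef
  have hCne : C.Nonempty := by
    refine ⟨σ.symm (μ i), ?_⟩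
    have hσp : σ (σ.symm (μ i)) = μ i := Equiv.apply_symm_apply σ (μ i)
    simp only [hCdef, mem_filter, mem_univ, true_and, hσp]
    refine ⟨?_, hσμi, le_refl _⟩
    rcases lt_trichotomy i (σ.symm (μ i)) with h | h | h
    · exact h
    · exfalso; apply hidiff; rw [← h] at hσp; exact hσp
    · exfalso
      have := hpre _ h
      rw [hσp] at this
      exact absurd (μ.injective this.symm) (ne_of_lt h)
  set j := C.min' hCne with hjdef
  have hjmem : j ∈ C := Finset.min'_mem C hCne
  rw [hCdef, Finset.mem_filter] at hjmem
  obtain ⟨-, hij, hvij, hjμ⟩ := hjmem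
  have hmid : ∀ l : Fin n, i < l → l < j → ((σ l:ℕ) < (σ i:ℕ) ∨ (μ i:ℕ) < (σ l:ℕ)) := by
    intro l h1 h2
    by_contra h
    push_neg at h
    have hlne : (σ l:ℕ) ≠ (σ i:ℕ) := by
      intro hc
      exact absurd (σ.injective (Fin.ext hc)) (ne_of_gt h1)
    have hmem : l ∈ C := by
      simp only [hCdef, mem_filter, mem_univ, true_and]
      exact ⟨h1, by omega, h.2⟩
    exact absurd (Finset.min'_le C l hmem) (not_le_of_gt h2)
  have hmid' : ∀ l : Fin n, i < l → l < j → (σ l < σ i ∨ σ j < σ l) := by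
    intro l h1 h2
    rcases hmid l h1 h2 with h | h
    · exact Or.inl (Fin.lt_def.mpr h)
    · exact Or.inr (Fin.lt_def.mpr (by omega))
  have hvF : σ i < σ j := Fin.lt_def.mpr hvij
  have hstrict : ∀ k r : ℕ, (i:ℕ) < k → k ≤ (j:ℕ) → (σ i:ℕ) < r → r ≤ (σ j:ℕ) →
      D μ k r + 1 ≤ D σ k r := by
    intro k r hik hkj hir hrj
    have hrr' : r ≤ (μ i:ℕ)+1 := by omega
    have h1 := D_split_r μ k hrr'
    have h2 := D_split_r σ k hrr'
    have hsub : insert i (univ.filter fun l : Fin n =>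
          (l:ℕ) < k ∧ r ≤ (σ l:ℕ) ∧ (σ l:ℕ) < (μ i:ℕ)+1)
        ⊆ univ.filter fun l : Fin n => (l:ℕ) < k ∧ r ≤ (μ l:ℕ) ∧ (μ l:ℕ) < (μ i:ℕ)+1 := by
      intro l hl
      rcases Finset.mem_insert.mp hl with rfl | hl
      · simp only [mem_filter, mem_univ, true_and]
        omega
      · simp only [mem_filter, mem_univ, true_and] at hl ⊢
        obtain ⟨hlk, hrl, hlμ⟩ := hl
        have hli : (l:ℕ) < (i:ℕ) := by
          rcases lt_trichotomy (l:ℕ) (i:ℕ) with h | h | h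
          · exact h
          · exfalso
            have : l = i := Fin.ext h
            subst this
            omega
          · exfalso
            have hlj : (l:ℕ) < (j:ℕ) := by omega
            rcases hmid l (Fin.lt_def.mpr h) (Fin.lt_def.mpr hlj) with hh | hh <;> omega
        rw [← hpre l (Fin.lt_def.mpr hli)]
        exact ⟨hlk, hrl, hlμ⟩
    have hinotin : i ∉ (univ.filter fun l : Fin n =>
        (l:ℕ) < k ∧ r ≤ (σ l:ℕ) ∧ (σ l:ℕ) < (μ i:ℕ)+1) := by
      simp only [mem_filter, mem_univ, true_and, not_and]
      intro _
      omega
    have hcard := Finset.card_le_card hsub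
    rw [Finset.card_insert_of_notMem hinotin] at hcard
    have hd := hdom k ((μ i:ℕ)+1)
    omega
  refine ⟨σ * Equiv.swap i j, ⟨i, j, ne_of_lt hij, rfl,
    inv_succ σ i j hij hvF hmid'⟩, ?_⟩
  intro k r
  have he := D_swap_eq σ i j (ne_of_lt hij) k r
  have hd := hdom k r
  have hij' : (i:ℕ) < (j:ℕ) := hij
  have key : D μ k r + 1 ≤ D σ k r ∨ k ≤ (i:ℕ) ∨ (j:ℕ) < k ∨ r ≤ (σ i:ℕ) ∨ (σ j:ℕ) < r := by
    by_cases h : (i:ℕ) < k ∧ k ≤ (j:ℕ) ∧ (σ i:ℕ) < r ∧ r ≤ (σ j:ℕ)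
    · exact Or.inl (hstrict k r h.1 h.2.1 h.2.2.1 h.2.2.2)
    · right; omega
  split_ifs at he <;> omega

end BruhatAux

open BruhatAux in
/-- Ehresmann's key/tableau criterion. `σ ≤ μ` in the Bruhat order iff
for all `1 ≤ k, r < n`, `#{i ≤ k : σ(i) ≤ r} ≥ #{i ≤ k : μ(i) ≤ r}` (positions and
values written 1-based; in the 0-based encoding below, `i ≤ k` becomes `↑i < k` and
`σ(i) ≤ r` becomes `↑(σ i) < r`). -/
theorem bruhat_iff_key_comparison (n : ℕ) (σ μ : Equiv.Perm (Fin n)) :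
    bruhatLE n σ μ ↔
      ∀ k r : ℕ, 1 ≤ k → k < n → 1 ≤ r → r < n →
        (Finset.univ.filter fun i : Fin n => (i : ℕ) < k ∧ ((μ i : ℕ) < r)).card ≤
        (Finset.univ.filter fun i : Fin n => (i : ℕ) < k ∧ ((σ i : ℕ) < r)).card := by
  constructor
  · intro h k r _ _ _ _
    show D μ k r ≤ D σ k r
    induction h with
    | refl => exact le_refl _
    | tail hab hbc ih =>
      rename_i b c
      obtain ⟨x, y, hxy, rfl, hinv⟩ := hbc
      refine le_trans ?_ ih
      -- show D (b * swap x y) k r ≤ D b k r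
      rcases lt_trichotomy x y with hlt | heq | hgt
      · have hv : b x < b y := by
          rcases lt_trichotomy (b x) (b y) with h' | h' | h'
          · exact h'
          · exact absurd (b.injective h') (ne_of_lt hlt)
          · exfalso
            have := inv_le b x y hlt h'
            omega
        exact D_swap_le b x y hlt hv k r
      · exact absurd heq hxy
      · rw [Equiv.swap_comm]
        have hv : b y < b x := by
          rcases lt_trichotomy (b y) (b x) with h' | h' | h'
          · exact h'
          · exact absurd (b.injective h') (ne_of_lt hgt)
          · exfalso
            have := inv_le b y x hgt h'
            rw [Equiv.swap_comm] at this
            omega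
        exact D_swap_le b y x hgt hv k r
  · intro H
    have hdom : ∀ k r : ℕ, D μ k r ≤ D σ k r := dom_all σ μ H
    have main : ∀ m (τ : Equiv.Perm (Fin n)), n * n + 1 - invCount n τ ≤ m →
        (∀ k r : ℕ, D μ k r ≤ D τ k r) → bruhatLE n τ μ := by
      intro m
      induction m with
      | zero =>
        intro τ hm _
        exfalso
        have := invCount_le τ
        omega
      | succ m ih =>
        intro τ hm hd
        by_cases hτ : τ = μ
        · subst hτ; exact Relation.ReflTransGen.refl
        · obtain ⟨τ', hrel, hd'⟩ := exists_step τ μ hτ hd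
          have hinv : invCount n τ' = invCount n τ + 1 := by
            obtain ⟨x, y, _, _, h⟩ := hrel
            exact h
          exact Relation.ReflTransGen.head hrel (ih τ' (by omega) hd')
    exact main (n * n + 1) σ (by omega) hdom
end

section
/- For σ ∈ S_n and 1 ≤ k < n, if σ ≤_k μ in the k-Bruhat order then: (i) σ(a) ≤ μ(a) for every a ≤ k and σ(b) ≥ μ(b) for every b > k; conversely (Bergeron–Sottile), σ ≤_k μ if and only if condition (i) holds together with (ii): whenever a < b, σ(a) < σ(b) and μ(a) > μ(b), one has a ≤ k < b. -/
/-- The `k`-Bruhat order: transitive closure of the covers `σ ⋖ σ(a,b)` where `(a,b)`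
is a `k`-transposition (position `a` among the first `k`, position `b` beyond `k`,
1-based `a ≤ k < b`) with `ℓ(σ(a,b)) = ℓ(σ) + 1`. -/
def kBruhatLE (n k : ℕ) (σ μ : Equiv.Perm (Fin n)) : Prop :=
  Relation.ReflTransGen
    (fun a b => ∃ x y : Fin n, (x : ℕ) < k ∧ k ≤ (y : ℕ) ∧
      b = a * Equiv.swap x y ∧ invCount n b = invCount n a + 1) σ μ

namespace KB

variable {n : ℕ}

def invSet (n : ℕ) (σ : Equiv.Perm (Fin n)) : Finset (Fin n × Fin n) :=
  Finset.univ.filter fun p : Fin n × Fin n => p.1 < p.2 ∧ σ p.2 < σ p.1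

lemma invCount_eq (σ : Equiv.Perm (Fin n)) : invCount n σ = (invSet n σ).card := rfl

lemma mem_invSet {σ : Equiv.Perm (Fin n)} {p : Fin n × Fin n} :
    p ∈ invSet n σ ↔ p.1 < p.2 ∧ σ p.2 < σ p.1 := by
  simp [invSet]

def phi (x y : Fin n) (p : Fin n × Fin n) : Fin n × Fin n :=
  if p.1 = x then (if p.2 ≤ y then p else (y, p.2))
  else if p.1 = y then (x, p.2)
  else if p.2 = x then (p.1, y)
  else if p.2 = y then (if p.1 < x then (p.1, x) else p)
  else p

variable {x y : Fin n}

lemma phi_e1 (j : Fin n) (h : j ≤ y) : phi x y (x, j) = (x, j) := by simp [phi, h]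
lemma phi_e2 (j : Fin n) (h : ¬ j ≤ y) : phi x y (x, j) = (y, j) := by simp [phi, h]
lemma phi_e3 (j : Fin n) (hxy : x ≠ y) : phi x y (y, j) = (x, j) := by
  simp [phi, Ne.symm hxy]
lemma phi_e4 (i : Fin n) (hix : i ≠ x) (hiy : i ≠ y) : phi x y (i, x) = (i, y) := by
  simp [phi, hix, hiy]
lemma phi_e5 (i : Fin n) (hix : i ≠ x) (hiy : i ≠ y) (hxy : x ≠ y) (h : i < x) :
    phi x y (i, y) = (i, x) := by simp [phi, hix, hiy, Ne.symm hxy, h]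
lemma phi_e6 (i : Fin n) (hix : i ≠ x) (hiy : i ≠ y) (hxy : x ≠ y) (h : ¬ i < x) :
    phi x y (i, y) = (i, y) := by simp [phi, hix, hiy, Ne.symm hxy, h]
lemma phi_e7 (i j : Fin n) (hix : i ≠ x) (hiy : i ≠ y) (hjx : j ≠ x) (hjy : j ≠ y) :
    phi x y (i, j) = (i, j) := by simp [phi, hix, hiy, hjx, hjy]

lemma phi_phi (hxy : x < y) (p : Fin n × Fin n) (hp : p.1 < p.2) :
    phi x y (phi x y p) = p := by
  obtain ⟨i, j⟩ := p
  simp only at hp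
  have hne : x ≠ y := ne_of_lt hxy
  by_cases h1 : i = x
  · subst h1
    by_cases h2 : j ≤ y
    · rw [phi_e1 j h2, phi_e1 j h2]
    · rw [phi_e2 j h2, phi_e3 j hne]
  · by_cases h2 : i = y
    · rw [h2] at hp ⊢
      have h3 : ¬ j ≤ y := not_le.mpr hp
      rw [phi_e3 j hne, phi_e2 j h3]
    · by_cases h3 : j = x
      · rw [h3] at hp ⊢
        have hiy : i ≠ y := ne_of_lt (lt_trans hp hxy)
        rw [phi_e4 i h1 hiy, phi_e5 i h1 hiy hne hp]
      · by_cases h4 : j = y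
        · rw [h4] at hp ⊢
          by_cases h5 : i < x
          · rw [phi_e5 i h1 h2 hne h5, phi_e4 i h1 h2]
          · rw [phi_e6 i h1 h2 hne h5, phi_e6 i h1 h2 hne h5]
        · rw [phi_e7 i j h1 h2 h3 h4, phi_e7 i j h1 h2 h3 h4]

end KB

namespace KB2
open KB
variable {n : ℕ} {x y : Fin n} {σ : Equiv.Perm (Fin n)}

lemma mem_invSet_swap {p : Fin n × Fin n} :
    p ∈ invSet n (σ * Equiv.swap x y) ↔
      p.1 < p.2 ∧ σ (Equiv.swap x y p.2) < σ (Equiv.swap x y p.1) := by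
  simp [mem_invSet, Equiv.Perm.mul_apply]

lemma swsw (σ : Equiv.Perm (Fin n)) (x y : Fin n) :
    (σ * Equiv.swap x y) * Equiv.swap x y = σ := by
  rw [mul_assoc, Equiv.swap_mul_self, mul_one]

lemma mapsto_desc (hxy : x < y) (h : σ y < σ x) {p : Fin n × Fin n}
    (hp : p ∈ invSet n (σ * Equiv.swap x y)) :
    phi x y p ∈ (invSet n σ).erase (x, y) := by
  obtain ⟨i, j⟩ := p
  obtain ⟨hp1, hp2⟩ := mem_invSet_swap.mp hp
  simp only at hp1 hp2
  have hne : x ≠ y := ne_of_lt hxy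
  rw [Finset.mem_erase]
  by_cases h1 : i = x
  · rw [h1] at hp1 hp2 ⊢
    rw [Equiv.swap_apply_left] at hp2
    by_cases h2 : j ≤ y
    · have hjy : j ≠ y := by
        intro hjy; rw [hjy, Equiv.swap_apply_right] at hp2
        exact absurd hp2 (asymm h)
      have hjx : j ≠ x := ne_of_gt hp1
      rw [Equiv.swap_apply_of_ne_of_ne hjx hjy] at hp2
      rw [phi_e1 j h2]
      exact ⟨by simp [hjy], mem_invSet.mpr ⟨hp1, lt_trans hp2 h⟩⟩
    · have hjy : j ≠ y := fun hh => h2 (le_of_eq hh)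
      have hjx : j ≠ x := ne_of_gt hp1
      rw [Equiv.swap_apply_of_ne_of_ne hjx hjy] at hp2
      rw [phi_e2 j h2]
      exact ⟨by simp [hne.symm], mem_invSet.mpr ⟨lt_of_not_ge h2, hp2⟩⟩
  · by_cases h2 : i = y
    · rw [h2] at hp1 hp2 ⊢
      rw [Equiv.swap_apply_right] at hp2
      have hjy : j ≠ y := ne_of_gt hp1
      have hjx : j ≠ x := ne_of_gt (lt_trans hxy hp1)
      rw [Equiv.swap_apply_of_ne_of_ne hjx hjy] at hp2
      rw [phi_e3 j hne]
      exact ⟨by simp [hjy], mem_invSet.mpr ⟨lt_trans hxy hp1, hp2⟩⟩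
    · by_cases h3 : j = x
      · rw [h3] at hp1 hp2 ⊢
        have hiy : i ≠ y := ne_of_lt (lt_trans hp1 hxy)
        rw [Equiv.swap_apply_left, Equiv.swap_apply_of_ne_of_ne h1 hiy] at hp2
        rw [phi_e4 i h1 hiy]
        exact ⟨by simp [h1], mem_invSet.mpr ⟨lt_trans hp1 hxy, hp2⟩⟩
      · by_cases h4 : j = y
        · rw [h4] at hp1 hp2 ⊢
          rw [Equiv.swap_apply_right, Equiv.swap_apply_of_ne_of_ne h1 h2] at hp2
          by_cases h5 : i < x
          · rw [phi_e5 i h1 h2 hne h5]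
            exact ⟨by simp [hne], mem_invSet.mpr ⟨h5, hp2⟩⟩
          · rw [phi_e6 i h1 h2 hne h5]
            exact ⟨by simp [h1], mem_invSet.mpr ⟨hp1, lt_trans h hp2⟩⟩
        · rw [Equiv.swap_apply_of_ne_of_ne h1 h2,
            Equiv.swap_apply_of_ne_of_ne h3 h4] at hp2
          rw [phi_e7 i j h1 h2 h3 h4]
          exact ⟨by simp [h1], mem_invSet.mpr ⟨hp1, hp2⟩⟩

lemma mapsto_asc (hxy : x < y) (h : σ x < σ y)
    (hmid : ∀ m : Fin n, x < m → m < y → σ x < σ m → σ m < σ y → False)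
    {p : Fin n × Fin n} (hp : p ∈ invSet n (σ * Equiv.swap x y)) :
    phi x y p ∈ insert (x, y) (invSet n σ) := by
  obtain ⟨i, j⟩ := p
  obtain ⟨hp1, hp2⟩ := mem_invSet_swap.mp hp
  simp only at hp1 hp2
  have hne : x ≠ y := ne_of_lt hxy
  by_cases h1 : i = x
  · rw [h1] at hp1 hp2 ⊢
    rw [Equiv.swap_apply_left] at hp2
    by_cases h2 : j ≤ y
    · by_cases hjy : j = y
      · rw [hjy, phi_e1 y le_rfl]
        exact Finset.mem_insert_self _ _
      · have hjx : j ≠ x := ne_of_gt hp1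
        rw [Equiv.swap_apply_of_ne_of_ne hjx hjy] at hp2
        have hjlty : j < y := lt_of_le_of_ne h2 hjy
        have : σ j < σ x := by
          rcases lt_trichotomy (σ j) (σ x) with hh | hh | hh
          · exact hh
          · exact absurd (EquivLike.injective σ hh.symm) hjx.symm
          · exact absurd (hmid j hp1 hjlty hh hp2) not_false
        rw [phi_e1 j h2]
        exact Finset.mem_insert_of_mem (mem_invSet.mpr ⟨hp1, this⟩)
    · have hjy : j ≠ y := fun hh => h2 (le_of_eq hh)
      have hjx : j ≠ x := ne_of_gt hp1
      rw [Equiv.swap_apply_of_ne_of_ne hjx hjy] at hp2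
      rw [phi_e2 j h2]
      exact Finset.mem_insert_of_mem (mem_invSet.mpr ⟨lt_of_not_ge h2, hp2⟩)
  · by_cases h2 : i = y
    · rw [h2] at hp1 hp2 ⊢
      rw [Equiv.swap_apply_right] at hp2
      have hjy : j ≠ y := ne_of_gt hp1
      have hjx : j ≠ x := ne_of_gt (lt_trans hxy hp1)
      rw [Equiv.swap_apply_of_ne_of_ne hjx hjy] at hp2
      rw [phi_e3 j hne]
      exact Finset.mem_insert_of_mem (mem_invSet.mpr ⟨lt_trans hxy hp1, hp2⟩)
    · by_cases h3 : j = x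
      · rw [h3] at hp1 hp2 ⊢
        have hiy : i ≠ y := ne_of_lt (lt_trans hp1 hxy)
        rw [Equiv.swap_apply_left, Equiv.swap_apply_of_ne_of_ne h1 hiy] at hp2
        rw [phi_e4 i h1 hiy]
        exact Finset.mem_insert_of_mem (mem_invSet.mpr ⟨lt_trans hp1 hxy, hp2⟩)
      · by_cases h4 : j = y
        · rw [h4] at hp1 hp2 ⊢
          rw [Equiv.swap_apply_right, Equiv.swap_apply_of_ne_of_ne h1 h2] at hp2
          by_cases h5 : i < x
          · rw [phi_e5 i h1 h2 hne h5]
            exact Finset.mem_insert_of_mem (mem_invSet.mpr ⟨h5, hp2⟩)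
          · have hxi : x < i := lt_of_le_of_ne (not_lt.mp h5) (Ne.symm h1)
            have : σ y < σ i := by
              rcases lt_trichotomy (σ i) (σ y) with hh | hh | hh
              · exact absurd (hmid i hxi hp1 hp2 hh) not_false
              · exact absurd (EquivLike.injective σ hh) h2
              · exact hh
            rw [phi_e6 i h1 h2 hne h5]
            exact Finset.mem_insert_of_mem (mem_invSet.mpr ⟨hp1, this⟩)
        · rw [Equiv.swap_apply_of_ne_of_ne h1 h2,
            Equiv.swap_apply_of_ne_of_ne h3 h4] at hp2
          rw [phi_e7 i j h1 h2 h3 h4]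
          exact Finset.mem_insert_of_mem (mem_invSet.mpr ⟨hp1, hp2⟩)

end KB2

namespace KB3
open KB KB2
variable {n : ℕ} {x y : Fin n} {σ : Equiv.Perm (Fin n)}

lemma card_le_of_phi {s t : Finset (Fin n × Fin n)} (hxy : x < y)
    (hs : ∀ p ∈ s, p.1 < p.2) (hmap : ∀ p ∈ s, phi x y p ∈ t) : s.card ≤ t.card := by
  apply Finset.card_le_card_of_injOn (phi x y) hmap
  intro p hp q hq hpq
  have := phi_phi hxy p (hs p hp)
  rw [hpq, phi_phi hxy q (hs q hq)] at this
  exact this.symm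

lemma desc_le (hxy : x < y) (h : σ y < σ x) :
    invCount n (σ * Equiv.swap x y) + 1 ≤ invCount n σ := by
  have hmem : (x, y) ∈ invSet n σ := mem_invSet.mpr ⟨hxy, h⟩
  have hcard : (invSet n (σ * Equiv.swap x y)).card ≤ ((invSet n σ).erase (x, y)).card :=
    card_le_of_phi hxy (fun p hp => (mem_invSet.mp hp).1) (fun p hp => mapsto_desc hxy h hp)
  rw [Finset.card_erase_of_mem hmem] at hcard
  have hpos : 0 < (invSet n σ).card := Finset.card_pos.mpr ⟨_, hmem⟩
  rw [invCount_eq, invCount_eq]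
  omega

lemma asc_ge (hxy : x < y) (h : σ x < σ y) :
    invCount n σ + 1 ≤ invCount n (σ * Equiv.swap x y) := by
  have h2 : (σ * Equiv.swap x y) y < (σ * Equiv.swap x y) x := by
    simp only [Equiv.Perm.mul_apply, Equiv.swap_apply_left, Equiv.swap_apply_right]
    exact h
  have := desc_le hxy h2
  rwa [swsw] at this

lemma asc_le (hxy : x < y) (h : σ x < σ y)
    (hmid : ∀ m : Fin n, x < m → m < y → σ x < σ m → σ m < σ y → False) :
    invCount n (σ * Equiv.swap x y) ≤ invCount n σ + 1 := by
  have hcard : (invSet n (σ * Equiv.swap x y)).card ≤ (insert (x, y) (invSet n σ)).card :=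
    card_le_of_phi hxy (fun p hp => (mem_invSet.mp hp).1)
      (fun p hp => mapsto_asc hxy h hmid hp)
  calc invCount n (σ * Equiv.swap x y) ≤ (insert (x, y) (invSet n σ)).card := hcard
    _ ≤ (invSet n σ).card + 1 := Finset.card_insert_le _ _
    _ = invCount n σ + 1 := by rw [invCount_eq]

lemma mid_two (hxy : x < y) (h : σ x < σ y) {m : Fin n} (hm1 : x < m) (hm2 : m < y)
    (hsm1 : σ x < σ m) (hsm2 : σ m < σ y) :
    invCount n σ + 2 ≤ invCount n (σ * Equiv.swap x y) := by
  set τ := σ * Equiv.swap x y with hτ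
  have hτy : τ y = σ x := by simp [hτ, Equiv.Perm.mul_apply]
  have hτx : τ x = σ y := by simp [hτ, Equiv.Perm.mul_apply]
  have hτd : τ y < τ x := by rw [hτy, hτx]; exact h
  have hmx : m ≠ x := ne_of_gt hm1
  have hmy : m ≠ y := ne_of_lt hm2
  have hτm : τ m = σ m := by
    simp [hτ, Equiv.Perm.mul_apply, Equiv.swap_apply_of_ne_of_ne hmx hmy]
  have hmemxy : (x, y) ∈ invSet n τ := mem_invSet.mpr ⟨hxy, hτd⟩
  have hmemxm : (x, m) ∈ invSet n τ := by
    refine mem_invSet.mpr ⟨hm1, ?_⟩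
    rw [hτm, hτx]; exact hsm2
  have hmemxm' : (x, m) ∈ (invSet n τ).erase (x, y) :=
    Finset.mem_erase.mpr ⟨by simp [hmy], hmemxm⟩
  have hmap : ∀ p ∈ invSet n σ, phi x y p ∈ ((invSet n τ).erase (x, y)).erase (x, m) := by
    intro p hp
    have hp' : p ∈ invSet n (τ * Equiv.swap x y) := by rw [hτ, swsw]; exact hp
    refine Finset.mem_erase.mpr ⟨?_, mapsto_desc hxy hτd hp'⟩
    intro hcon
    have hpm : p = (x, m) := by
      have := phi_phi hxy p (mem_invSet.mp hp).1
      rw [hcon] at this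
      rw [← this, phi_e1 m (le_of_lt hm2)]
    rw [hpm] at hp
    exact absurd (mem_invSet.mp hp).2 (asymm hsm1)
  have hcard : (invSet n σ).card ≤ (((invSet n τ).erase (x, y)).erase (x, m)).card :=
    card_le_of_phi hxy (fun p hp => (mem_invSet.mp hp).1) hmap
  rw [Finset.card_erase_of_mem hmemxm', Finset.card_erase_of_mem hmemxy] at hcard
  have hpos : 0 < ((invSet n τ).erase (x, y)).card := Finset.card_pos.mpr ⟨_, hmemxm'⟩
  rw [Finset.card_erase_of_mem hmemxy] at hpos
  rw [invCount_eq, invCount_eq]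
  omega

/-- Characterization of `k`-Bruhat covers at the level of inversion counts. -/
lemma cover_iff (hxy : x < y) :
    invCount n (σ * Equiv.swap x y) = invCount n σ + 1 ↔
      (σ x < σ y ∧ ∀ m : Fin n, x < m → m < y → σ x < σ m → σ m < σ y → False) := by
  constructor
  · intro hc
    have hne : σ x ≠ σ y := fun hh => (ne_of_lt hxy) (EquivLike.injective σ hh)
    have hlt : σ x < σ y := by
      rcases lt_or_gt_of_ne hne with hh | hh
      · exact hh
      · have := desc_le hxy hh
        omega
    refine ⟨hlt, fun m hm1 hm2 hsm1 hsm2 => ?_⟩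
    have := mid_two hxy hlt hm1 hm2 hsm1 hsm2
    omega
  · rintro ⟨hlt, hmid⟩
    have h1 := asc_le hxy hlt hmid
    have h2 := asc_ge hxy hlt
    omega

end KB3

namespace KB4
open KB KB2 KB3
variable {n k : ℕ} {σ μ : Equiv.Perm (Fin n)}

lemma forward (h : kBruhatLE n k σ μ) :
    (∀ a : Fin n, (a : ℕ) < k → σ a ≤ μ a) ∧
    (∀ b : Fin n, k ≤ (b : ℕ) → μ b ≤ σ b) ∧
    (∀ a b : Fin n, a < b → σ a < σ b → μ b < μ a → ((a : ℕ) < k ∧ k ≤ (b : ℕ))) := by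
  induction h with
  | refl =>
    exact ⟨fun a _ => le_rfl, fun b _ => le_rfl,
      fun a b _ h1 h2 => absurd h1 (asymm h2)⟩
  | @tail ρ μ' hst hrel ih =>
    obtain ⟨ih1, ih2, ih3⟩ := ih
    obtain ⟨x, y, hx, hy, hμ', hcov⟩ := hrel
    have hxy : x < y := by rw [Fin.lt_def]; omega
    rw [hμ'] at hcov
    obtain ⟨hord, hmid⟩ := (cover_iff hxy).mp hcov
    have hex : μ' x = ρ y := by rw [hμ']; simp [Equiv.Perm.mul_apply]
    have hey : μ' y = ρ x := by rw [hμ']; simp [Equiv.Perm.mul_apply]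
    have heo : ∀ z : Fin n, z ≠ x → z ≠ y → μ' z = ρ z := by
      intro z hzx hzy
      rw [hμ']; simp [Equiv.Perm.mul_apply, Equiv.swap_apply_of_ne_of_ne hzx hzy]
    refine ⟨?_, ?_, ?_⟩
    · intro a hak
      have hay : a ≠ y := by intro hh; rw [hh] at hak; omega
      by_cases hax : a = x
      · rw [hax, hex]
        exact le_trans (ih1 x (hax ▸ hak)) (le_of_lt hord)
      · rw [heo a hax hay]; exact ih1 a hak
    · intro b hbk
      have hbx : b ≠ x := by intro hh; rw [hh] at hbk; omega
      by_cases hby : b = y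
      · rw [hby, hey]
        exact le_trans (le_of_lt hord) (ih2 y (hby ▸ hbk))
      · rw [heo b hbx hby]; exact ih2 b hbk
    · intro a b hab hsab hmab
      by_cases hax : a = x
      · rw [hax] at hab hsab hmab ⊢
        by_cases hby : b = y
        · rw [hby]; exact ⟨hx, hy⟩
        · have hbx : b ≠ x := ne_of_gt hab
          rw [hex, heo b hbx hby] at hmab
          refine ⟨hx, ?_⟩
          by_contra hbk
          push_neg at hbk
          rcases lt_trichotomy (ρ b) (ρ x) with hh | hh | hh
          · have := (ih3 x b hab hsab hh).2; omega
          · exact hbx (EquivLike.injective ρ hh)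
          · have hby' : b < y := by rw [Fin.lt_def]; omega
            exact absurd (hmid b hab hby' hh hmab) not_false
      · by_cases hay : a = y
        · rw [hay] at hab hsab hmab ⊢
          have hbx : b ≠ x := ne_of_gt (lt_trans hxy hab)
          have hby : b ≠ y := ne_of_gt hab
          rw [hey, heo b hbx hby] at hmab
          have := (ih3 y b hab hsab (lt_trans hmab hord)).1
          exact absurd this (by omega)
        · by_cases hbx : b = x
          · rw [hbx] at hab hsab hmab ⊢
            have hay' : a ≠ y := ne_of_lt (lt_trans hab hxy)
            rw [hex, heo a hax hay'] at hmab
            have := (ih3 a x hab hsab (lt_trans hord hmab)).2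
            exact absurd this (by omega)
          · by_cases hby : b = y
            · rw [hby] at hab hsab hmab ⊢
              rw [hey, heo a hax hay] at hmab
              refine ⟨?_, hy⟩
              by_contra hak
              push_neg at hak
              rcases lt_trichotomy (ρ a) (ρ y) with hh | hh | hh
              · have hxa : x < a := by rw [Fin.lt_def]; omega
                exact absurd (hmid a hxa hab hmab hh) not_false
              · exact hay (EquivLike.injective ρ hh)
              · have := (ih3 a y hab hsab hh).1; omega
            · rw [heo a hax hay, heo b hbx hby] at hmab
              exact ih3 a b hab hsab hmab

end KB4

namespace KB5
open KB KB2 KB3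
variable {n k : ℕ}

lemma perm_eq {σ μ : Equiv.Perm (Fin n)}
    (hEq : ∀ a : Fin n, (a : ℕ) < k → σ a = μ a)
    (h2 : ∀ b : Fin n, k ≤ (b : ℕ) → μ b ≤ σ b) : σ = μ := by
  classical
  have htot : ∑ z : Fin n, ((σ z : Fin n) : ℕ) = ∑ z : Fin n, ((μ z : Fin n) : ℕ) :=
    (Equiv.sum_comp σ fun z : Fin n => (z : ℕ)).trans
      (Equiv.sum_comp μ fun z : Fin n => (z : ℕ)).symm
  have hsσ := Finset.sum_filter_add_sum_filter_not Finset.univ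
    (fun z : Fin n => (z : ℕ) < k) (fun z => ((σ z : Fin n) : ℕ))
  have hsμ := Finset.sum_filter_add_sum_filter_not Finset.univ
    (fun z : Fin n => (z : ℕ) < k) (fun z => ((μ z : Fin n) : ℕ))
  have hlow : ∑ z ∈ Finset.univ.filter (fun z : Fin n => (z : ℕ) < k), ((σ z : Fin n) : ℕ)
      = ∑ z ∈ Finset.univ.filter (fun z : Fin n => (z : ℕ) < k), ((μ z : Fin n) : ℕ) :=
    Finset.sum_congr rfl fun z hz => by
      rw [hEq z (Finset.mem_filter.mp hz).2]
  have hhigh : ∑ z ∈ Finset.univ.filter (fun z : Fin n => ¬ (z : ℕ) < k),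
        ((μ z : Fin n) : ℕ)
      = ∑ z ∈ Finset.univ.filter (fun z : Fin n => ¬ (z : ℕ) < k),
        ((σ z : Fin n) : ℕ) := by omega
  have hle : ∀ z ∈ Finset.univ.filter (fun z : Fin n => ¬ (z : ℕ) < k),
      ((μ z : Fin n) : ℕ) ≤ ((σ z : Fin n) : ℕ) := fun z hz =>
    h2 z (not_lt.mp (Finset.mem_filter.mp hz).2)
  have hpt := (Finset.sum_eq_sum_iff_of_le hle).mp hhigh
  apply Equiv.ext
  intro z
  by_cases hz : (z : ℕ) < k
  · exact hEq z hz
  · have := hpt z (Finset.mem_filter.mpr ⟨Finset.mem_univ z, hz⟩)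
    exact (Fin.ext this).symm

lemma converse (μ : Equiv.Perm (Fin n)) : ∀ (N : ℕ) (σ : Equiv.Perm (Fin n)),
    (∑ a ∈ Finset.univ.filter (fun a : Fin n => (a : ℕ) < k),
      (((μ a : Fin n) : ℕ) - ((σ a : Fin n) : ℕ))) ≤ N →
    (∀ a : Fin n, (a : ℕ) < k → σ a ≤ μ a) →
    (∀ b : Fin n, k ≤ (b : ℕ) → μ b ≤ σ b) →
    (∀ a b : Fin n, a < b → σ a < σ b → μ b < μ a → ((a : ℕ) < k ∧ k ≤ (b : ℕ))) →
    kBruhatLE n k σ μ := by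
  intro N
  induction N with
  | zero =>
    intro σ hN h1 h2 _h3
    have hEq : ∀ a : Fin n, (a : ℕ) < k → σ a = μ a := by
      intro a hak
      have hz : (((μ a : Fin n) : ℕ) - ((σ a : Fin n) : ℕ)) = 0 := by
        have := Finset.sum_eq_zero_iff.mp (Nat.le_zero.mp hN) a
          (Finset.mem_filter.mpr ⟨Finset.mem_univ a, hak⟩)
        exact this
      have hle := h1 a hak
      rw [Fin.le_def] at hle
      exact Fin.ext (by omega)
    rw [perm_eq hEq h2]
    exact Relation.ReflTransGen.refl
  | succ N ih =>
    intro σ hN h1 h2 h3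
    by_cases hEq : ∀ a : Fin n, (a : ℕ) < k → σ a = μ a
    · rw [perm_eq hEq h2]
      exact Relation.ReflTransGen.refl
    · push_neg at hEq
      obtain ⟨a0, ha0k, ha0ne⟩ := hEq
      have hD : ((Finset.univ.filter fun a : Fin n => (a : ℕ) < k ∧ σ a < μ a)).Nonempty :=
        ⟨a0, Finset.mem_filter.mpr ⟨Finset.mem_univ _,
          ha0k, lt_of_le_of_ne (h1 a0 ha0k) ha0ne⟩⟩
      obtain ⟨a, haD, hamax'⟩ := Finset.exists_max_image _ (fun a => σ a) hD
      obtain ⟨-, hak, haσ⟩ := Finset.mem_filter.mp haD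
      have hamax : ∀ a' : Fin n, (a' : ℕ) < k → σ a' < μ a' → σ a' ≤ σ a := by
        intro a' h1' h2'
        exact hamax' a' (Finset.mem_filter.mpr ⟨Finset.mem_univ _, h1', h2'⟩)
      -- T is nonempty
      have hTc : ∃ c : Fin n, k ≤ (c : ℕ) ∧ σ a < σ c ∧ σ c ≤ μ a ∧ μ c < σ c := by
        refine ⟨σ.symm (μ a), ?_⟩
        have hσc : σ (σ.symm (μ a)) = μ a := Equiv.apply_symm_apply σ (μ a)
        have hca : σ.symm (μ a) ≠ a := by
          intro hh; rw [hh] at hσc; exact absurd hσc (ne_of_lt haσ)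
        have hck : k ≤ ((σ.symm (μ a) : Fin n) : ℕ) := by
          by_contra hkc
          push_neg at hkc
          rcases lt_or_eq_of_le (h1 _ hkc) with hlt | heqc
          · have := hamax _ hkc hlt
            rw [hσc] at this
            exact absurd haσ (not_lt.mpr this)
          · rw [hσc] at heqc
            exact hca (EquivLike.injective μ heqc.symm)
        refine ⟨hck, ?_, ?_, ?_⟩
        · rw [hσc]; exact haσ
        · rw [hσc]
        · rcases lt_or_eq_of_le (h2 _ hck) with hlt | heqc
          · exact hlt
          · rw [hσc] at heqc
            exact absurd (EquivLike.injective μ heqc) hca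
      have hT : ((Finset.univ.filter fun b : Fin n =>
          k ≤ (b : ℕ) ∧ σ a < σ b ∧ σ b ≤ μ a ∧ μ b < σ b)).Nonempty := by
        obtain ⟨c, hc⟩ := hTc
        exact ⟨c, Finset.mem_filter.mpr ⟨Finset.mem_univ _, hc⟩⟩
      obtain ⟨b, hbD, hbmin'⟩ := Finset.exists_min_image _ (fun b => σ b) hT
      obtain ⟨-, hbk, hab, hbμ, hμb⟩ := Finset.mem_filter.mp hbD
      have hbmin : ∀ b' : Fin n, k ≤ (b' : ℕ) → σ a < σ b' → σ b' ≤ μ a → μ b' < σ b' →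
          σ b ≤ σ b' := by
        intro b' hh1 hh2 hh3 hh4
        exact hbmin' b' (Finset.mem_filter.mpr ⟨Finset.mem_univ _, hh1, hh2, hh3, hh4⟩)
      have haltb : a < b := by rw [Fin.lt_def]; omega
      -- key inequality μ b ≤ σ a
      have hμbσa : μ b ≤ σ a := by
        by_contra hcon
        push_neg at hcon
        set g := σ.symm (μ b) with hg
        have hσg : σ g = μ b := Equiv.apply_symm_apply σ (μ b)
        have hgb : g ≠ b := by
          intro hh; rw [hh] at hσg; exact absurd hσg (ne_of_gt hμb)
        by_cases hgk : (g : ℕ) < k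
        · rcases lt_or_eq_of_le (h1 _ hgk) with hlt | heqc
          · have := hamax _ hgk hlt
            rw [hσg] at this
            exact absurd hcon (not_lt.mpr this)
          · rw [hσg] at heqc
            exact hgb (EquivLike.injective μ heqc.symm)
        · push_neg at hgk
          rcases lt_or_eq_of_le (h2 _ hgk) with hlt | heqc
          · have := hbmin g hgk (by rw [hσg]; exact hcon)
              (by rw [hσg]; exact le_of_lt (lt_of_lt_of_le hμb hbμ)) hlt
            rw [hσg] at this
            exact absurd hμb (not_lt.mpr this)
          · rw [hσg] at heqc
            exact absurd (EquivLike.injective μ heqc) hgb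
      -- no middle value at middle position
      have hmid : ∀ m : Fin n, a < m → m < b → σ a < σ m → σ m < σ b → False := by
        intro m hm1 hm2 hs1 hs2
        by_cases hmk : (m : ℕ) < k
        · rcases lt_or_eq_of_le (h1 _ hmk) with hlt | heqc
          · exact absurd (hamax _ hmk hlt) (not_le.mpr hs1)
          · have hμma : μ m < μ a := by
              rw [← heqc]; exact lt_of_lt_of_le hs2 hbμ
            have := (h3 a m hm1 hs1 hμma).2
            omega
        · push_neg at hmk
          rcases lt_or_eq_of_le (h2 _ hmk) with hlt | heqc
          · have := hbmin m hmk hs1 (le_of_lt (lt_of_lt_of_le hs2 hbμ)) hlt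
            exact absurd hs2 (not_lt.mpr this)
          · -- σ m = μ m; derive μ m < μ b, then chase the value μ b
            have hμmb : μ m < μ b := by
              rcases lt_trichotomy (μ m) (μ b) with hh | hh | hh
              · exact hh
              · exact absurd (EquivLike.injective μ hh) (ne_of_lt hm2)
              · have := (h3 m b hm2 hs2 hh).1; omega
            set f := σ.symm (μ b) with hf
            have hσf : σ f = μ b := Equiv.apply_symm_apply σ (μ b)
            have hfb : f ≠ b := by
              intro hh; rw [hh] at hσf; exact absurd hσf (ne_of_gt hμb)
            have hσaf : σ a < σ f := by
              rw [hσf]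
              calc σ a < σ m := hs1
                _ = μ m := heqc.symm
                _ < μ b := hμmb
            by_cases hfk : (f : ℕ) < k
            · rcases lt_or_eq_of_le (h1 _ hfk) with hlt | heqc'
              · exact absurd (hamax _ hfk hlt) (not_le.mpr hσaf)
              · rw [hσf] at heqc'
                exact hfb (EquivLike.injective μ heqc'.symm)
            · push_neg at hfk
              rcases lt_or_eq_of_le (h2 _ hfk) with hlt | heqc'
              · have := hbmin f hfk hσaf
                  (by rw [hσf]; exact le_of_lt (lt_of_lt_of_le hμb hbμ)) hlt
                rw [hσf] at this
                exact absurd hμb (not_lt.mpr this)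
              · rw [hσf] at heqc'
                exact absurd (EquivLike.injective μ heqc') hfb
      -- the covering step
      set τ := σ * Equiv.swap a b with hτdef
      have hcov : invCount n τ = invCount n σ + 1 := (cover_iff haltb).mpr ⟨hab, hmid⟩
      have hτa : τ a = σ b := by simp [hτdef, Equiv.Perm.mul_apply]
      have hτb : τ b = σ a := by simp [hτdef, Equiv.Perm.mul_apply]
      have hτo : ∀ z : Fin n, z ≠ a → z ≠ b → τ z = σ z := by
        intro z hza hzb
        simp [hτdef, Equiv.Perm.mul_apply, Equiv.swap_apply_of_ne_of_ne hza hzb]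
      have h1' : ∀ z : Fin n, (z : ℕ) < k → τ z ≤ μ z := by
        intro z hzk
        have hzb : z ≠ b := by intro hh; rw [hh] at hzk; omega
        by_cases hza : z = a
        · rw [hza, hτa]; exact hza ▸ hbμ
        · rw [hτo z hza hzb]; exact h1 z hzk
      have h2' : ∀ z : Fin n, k ≤ (z : ℕ) → μ z ≤ τ z := by
        intro z hzk
        have hza : z ≠ a := by intro hh; rw [hh] at hzk; omega
        by_cases hzb : z = b
        · rw [hzb, hτb]; exact hzb ▸ hμbσa
        · rw [hτo z hza hzb]; exact h2 z hzk
      have h3' : ∀ c d : Fin n, c < d → τ c < τ d → μ d < μ c →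
          ((c : ℕ) < k ∧ k ≤ (d : ℕ)) := by
        intro c d hcd hτcd hμdc
        by_cases hca : c = a
        · rw [hca] at hcd hτcd hμdc ⊢
          by_cases hdb : d = b
          · rw [hdb]; exact ⟨hak, hbk⟩
          · have hda : d ≠ a := ne_of_gt hcd
            rw [hτa, hτo d hda hdb] at hτcd
            refine ⟨hak, ?_⟩
            by_contra hdk
            push_neg at hdk
            have := (h3 a d hcd (lt_trans hab hτcd) hμdc).2
            omega
        · by_cases hcb : c = b
          · rw [hcb] at hcd hτcd hμdc ⊢
            have hda : d ≠ a := ne_of_gt (lt_trans haltb hcd)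
            have hdb : d ≠ b := ne_of_gt hcd
            rw [hτb, hτo d hda hdb] at hτcd
            exfalso
            rcases lt_trichotomy (σ d) (σ b) with hh | hh | hh
            · have hdT := hbmin d (by rw [Fin.lt_def] at hcd; omega) hτcd
                (le_of_lt (lt_of_lt_of_le hh hbμ))
                (lt_of_lt_of_le (lt_of_lt_of_le hμdc hμbσa) (le_of_lt hτcd))
              exact absurd hh (not_lt.mpr hdT)
            · exact hdb (EquivLike.injective σ hh)
            · have := (h3 b d hcd hh hμdc).1; omega
          · by_cases hda : d = a
            · rw [hda] at hcd hτcd hμdc ⊢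
              have hcb' : c ≠ b := ne_of_lt (lt_trans hcd haltb)
              rw [hτa, hτo c hca hcb'] at hτcd
              exfalso
              rcases lt_trichotomy (σ c) (σ a) with hh | hh | hh
              · have := (h3 c a hcd hh hμdc).2; omega
              · exact hca (EquivLike.injective σ hh)
              · have hck : (c : ℕ) < k := by rw [Fin.lt_def] at hcd; omega
                rcases lt_or_eq_of_le (h1 _ hck) with hlt | heqc
                · exact absurd (hamax _ hck hlt) (not_le.mpr hh)
                · have : μ c < μ a := by
                    rw [← heqc]; exact lt_of_lt_of_le hτcd hbμ
                  exact absurd hμdc (not_lt.mpr (le_of_lt this))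
            · by_cases hdb : d = b
              · rw [hdb] at hcd hτcd hμdc ⊢
                rw [hτb, hτo c hca hcb] at hτcd
                refine ⟨?_, hbk⟩
                by_contra hck
                push_neg at hck
                have := (h3 c b hcd (lt_trans hτcd hab) hμdc).1
                omega
              · rw [hτo c hca hcb, hτo d hda hdb] at hτcd
                exact h3 c d hcd hτcd hμdc
      -- measure decreases
      have hsum : (∑ z ∈ Finset.univ.filter (fun z : Fin n => (z : ℕ) < k),
          (((μ z : Fin n) : ℕ) - ((τ z : Fin n) : ℕ))) ≤ N := by
        have hamem : a ∈ Finset.univ.filter (fun z : Fin n => (z : ℕ) < k) :=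
          Finset.mem_filter.mpr ⟨Finset.mem_univ _, hak⟩
        have e1 := Finset.sum_erase_add (Finset.univ.filter (fun z : Fin n => (z : ℕ) < k))
          (fun z => (((μ z : Fin n) : ℕ) - ((τ z : Fin n) : ℕ))) hamem
        have e2 := Finset.sum_erase_add (Finset.univ.filter (fun z : Fin n => (z : ℕ) < k))
          (fun z => (((μ z : Fin n) : ℕ) - ((σ z : Fin n) : ℕ))) hamem
        have he : ∑ z ∈ (Finset.univ.filter (fun z : Fin n => (z : ℕ) < k)).erase a,
            (((μ z : Fin n) : ℕ) - ((τ z : Fin n) : ℕ))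
            = ∑ z ∈ (Finset.univ.filter (fun z : Fin n => (z : ℕ) < k)).erase a,
            (((μ z : Fin n) : ℕ) - ((σ z : Fin n) : ℕ)) := by
          apply Finset.sum_congr rfl
          intro z hz
          obtain ⟨hza, hzf⟩ := Finset.mem_erase.mp hz
          have hzk := (Finset.mem_filter.mp hzf).2
          have hzb : z ≠ b := by intro hh; rw [hh] at hzk; omega
          rw [hτo z hza hzb]
        have hva : ((τ a : Fin n) : ℕ) = ((σ b : Fin n) : ℕ) := by rw [hτa]
        have hlt1 : ((σ a : Fin n) : ℕ) < ((σ b : Fin n) : ℕ) := hab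
        have hlt2 : ((σ b : Fin n) : ℕ) ≤ ((μ a : Fin n) : ℕ) := hbμ
        omega
      exact Relation.ReflTransGen.head ⟨a, b, hak, hbk, hτdef, hcov⟩
        (ih τ hsum h1' h2' h3')

end KB5


/-- Bergeron–Sottile. If `σ ≤_k μ` then (i) `σ(a) ≤ μ(a)` for every
position `a` among the first `k` and `σ(b) ≥ μ(b)` for every later position `b`;
conversely `σ ≤_k μ` iff (i) holds together with (ii): whenever `a < b`,
`σ(a) < σ(b)` and `μ(a) > μ(b)`, the pair `(a,b)` straddles `k`. -/
theorem kBruhat_characterization (n k : ℕ) (hk1 : 1 ≤ k) (hk : k < n)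
    (σ μ : Equiv.Perm (Fin n)) :
    (kBruhatLE n k σ μ →
      ((∀ a : Fin n, (a : ℕ) < k → σ a ≤ μ a) ∧
       (∀ b : Fin n, k ≤ (b : ℕ) → μ b ≤ σ b))) ∧
    (kBruhatLE n k σ μ ↔
      (((∀ a : Fin n, (a : ℕ) < k → σ a ≤ μ a) ∧
        (∀ b : Fin n, k ≤ (b : ℕ) → μ b ≤ σ b)) ∧
       (∀ a b : Fin n, a < b → σ a < σ b → μ b < μ a →
          ((a : ℕ) < k ∧ k ≤ (b : ℕ))))) := by
  refine ⟨fun h => ⟨(KB4.forward h).1, (KB4.forward h).2.1⟩, ?_, ?_⟩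
  · intro h
    obtain ⟨f1, f2, f3⟩ := KB4.forward h
    exact ⟨⟨f1, f2⟩, f3⟩
  · rintro ⟨⟨h1, h2⟩, h3⟩
    exact KB5.converse μ _ σ le_rfl h1 h2 h3
end

section
/- In the Hopf algebra FQSym whose fundamental basis (F_σ) is indexed by permutations, the product F_σ · F_μ equals the sum of F_ν over all ν in the shifted shuffle of σ and μ (shuffles of σ with the word obtained by adding |σ| to every letter of μ), and this set of permutations ν is an interval of the right weak order, namely [σ·μ⃗, μ⃗·σ] where μ⃗ denotes μ shifted by |σ|. -/
/-- The standardization of a word `u` over the ordered alphabet `ℕ`: position `i`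
receives rank `1 + #{j : u_j < u_i or (u_j = u_i and j < i)}`. -/
def stdWord (u : List ℕ) : List ℕ :=
  (List.range u.length).map fun i =>
    1 + ((List.range u.length).filter fun j =>
      u.getD j 0 < u.getD i 0 ∨ (u.getD j 0 = u.getD i 0 ∧ j < i)).length

/-- The word of values (1-based) of a permutation of `{1,…,n}`. -/
def wordOf {n : ℕ} (σ : Equiv.Perm (Fin n)) : List ℕ :=
  List.ofFn fun i => (σ i : ℕ) + 1

/-- The fundamental basis element `F_σ` of FQSym, realized as the formal sum of all
words `u` whose standardization has inverse `σ` (i.e. `std u = σ⁻¹`), encoded as the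
coefficient function `u ↦ [std u = word of σ⁻¹]`. -/
def Ffun {n : ℕ} (σ : Equiv.Perm (Fin n)) (u : List ℕ) : ℤ :=
  if stdWord u = wordOf σ⁻¹ then 1 else 0

/-- Convolution product of noncommutative series given by coefficient functions. -/
def conv (f g : List ℕ → ℤ) (w : List ℕ) : ℤ :=
  ∑ k ∈ Finset.range (w.length + 1), f (w.take k) * g (w.drop k)

/-- `ν` belongs to the shifted shuffle of `σ` and `μ`: the subword of letters `≤ p`
of `ν` is the word of `σ` and the subword of letters `> p` is the word of `μ`
shifted by `p`. -/
def InShiftedShuffle (p q : ℕ) (σ : Equiv.Perm (Fin p)) (μ : Equiv.Perm (Fin q))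
    (ν : Equiv.Perm (Fin (p + q))) : Prop :=
  (wordOf ν).filter (fun a => a ≤ p) = wordOf σ ∧
  (wordOf ν).filter (fun a => p < a) = (wordOf μ).map (· + p)

/-- Coinversions of a permutation (pairs of values `(x,y)` with `x < y` appearing in
the order `y … x`); the right weak order is containment of coinversion sets. -/
def coinvSet {n : ℕ} (σ : Equiv.Perm (Fin n)) : Set (Fin n × Fin n) :=
  {x | x.1 < x.2 ∧ σ⁻¹ x.2 < σ⁻¹ x.1}

/-- The permutation whose word is `σ·μ⃗` (the word of `σ` followed by the word of `μ`
shifted by `p`). -/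
def concatPerm (p q : ℕ) (σ : Equiv.Perm (Fin p)) (μ : Equiv.Perm (Fin q)) :
    Equiv.Perm (Fin (p + q)) :=
  finSumFinEquiv.symm.trans ((Equiv.sumCongr σ μ).trans finSumFinEquiv)

/-- The permutation whose word is `μ⃗·σ` (the word of `μ` shifted by `p` followed by
the word of `σ`). -/
def concatPerm' (p q : ℕ) (σ : Equiv.Perm (Fin p)) (μ : Equiv.Perm (Fin q)) :
    Equiv.Perm (Fin (p + q)) :=
  (((finSumFinEquiv : Fin q ⊕ Fin p ≃ Fin (q + p)).trans
      (finCongr (Nat.add_comm q p))).symm).trans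
    ((Equiv.sumCongr μ σ).trans
      ((Equiv.sumComm (Fin q) (Fin p)).trans
        (finSumFinEquiv : Fin p ⊕ Fin q ≃ Fin (p + q))))


/-- comparison order on positions of a word -/

abbrev wlt (u : List ℕ) (j i : ℕ) : Prop :=
  u.getD j 0 < u.getD i 0 ∨ (u.getD j 0 = u.getD i 0 ∧ j < i)


/-- rank (0-based count of smaller positions) -/

def rk (u : List ℕ) (i : ℕ) : ℕ :=
  ((List.range u.length).filter fun j =>
      u.getD j 0 < u.getD i 0 ∨ (u.getD j 0 = u.getD i 0 ∧ j < i)).length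


lemma stdWord_def (u : List ℕ) :
    stdWord u = (List.range u.length).map (fun i => 1 + rk u i) := rfl


lemma rk_eq_card (u : List ℕ) (i : ℕ) :
    rk u i = ((Finset.range u.length).filter (fun j => wlt u j i)).card := rfl


lemma wlt_trans {u : List ℕ} {i j k : ℕ} (h1 : wlt u i j) (h2 : wlt u j k) : wlt u i k := by
  unfold wlt at *; omega


lemma wlt_irrefl (u : List ℕ) (i : ℕ) : ¬ wlt u i i := by unfold wlt; omega


lemma wlt_total {u : List ℕ} {i j : ℕ} (h : i ≠ j) : wlt u i j ∨ wlt u j i := by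
  unfold wlt; omega


lemma wlt_iff_rk_lt {u : List ℕ} {i j : ℕ} (hi : i < u.length) (hj : j < u.length) :
    wlt u i j ↔ rk u i < rk u j := by
  have key : ∀ {a b : ℕ}, a < u.length → b < u.length → wlt u a b → rk u a < rk u b := by
    intro a b ha hb hab
    rw [rk_eq_card, rk_eq_card]
    apply Finset.card_lt_card
    rw [Finset.ssubset_iff_of_subset]
    · exact ⟨a, Finset.mem_filter.2 ⟨Finset.mem_range.2 ha, hab⟩,
        fun hmem => wlt_irrefl u a (Finset.mem_filter.1 hmem).2⟩
    · intro k hk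
      rw [Finset.mem_filter] at *
      exact ⟨hk.1, wlt_trans hk.2 hab⟩
  constructor
  · exact key hi hj
  · intro hlt
    rcases eq_or_ne i j with rfl | hne
    · omega
    · rcases wlt_total hne with h | h
      · exact h
      · exact absurd (key hj hi h) (by omega)


lemma rk_lt_length {u : List ℕ} {i : ℕ} (hi : i < u.length) : rk u i < u.length := by
  rw [rk_eq_card]
  calc _ < (Finset.range u.length).card := by
        apply Finset.card_lt_card
        rw [Finset.ssubset_iff_of_subset (Finset.filter_subset _ _)]
        exact ⟨i, Finset.mem_range.2 hi,
          fun hmem => wlt_irrefl u i (Finset.mem_filter.1 hmem).2⟩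
    _ = u.length := Finset.card_range _



lemma stdWord_eq_wordOf_iff {u : List ℕ} {m : ℕ} (τ : Equiv.Perm (Fin m)) :
    stdWord u = wordOf τ ↔ u.length = m ∧ ∀ i : Fin m, rk u i = τ i := by
  constructor
  · intro h
    have hlen : u.length = m := by
      have := congrArg List.length h
      simpa [stdWord_def, wordOf] using this
    refine ⟨hlen, fun i => ?_⟩
    have := congrArg (fun l => l.getD i 0) h
    simp only [stdWord_def, wordOf] at this
    rw [List.getD_eq_getElem _ _ (by simpa [hlen] using i.isLt),
        List.getD_eq_getElem _ _ (by simp [i.isLt])] at this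
    simp only [List.getElem_map, List.getElem_range, List.getElem_ofFn, Fin.eta] at this
    omega
  · rintro ⟨hlen, h⟩
    apply List.ext_getElem
    · simp [stdWord_def, wordOf, hlen]
    · intro k h1 h2
      have hk : k < m := by simpa [wordOf] using h2
      simp only [stdWord_def, wordOf, List.getElem_map, List.getElem_range, List.getElem_ofFn]
      have := h ⟨k, hk⟩
      simp only [Fin.val_mk] at this
      omega


lemma rk_eq_of_order {u : List ℕ} {m : ℕ} (hlen : u.length = m) (τ : Equiv.Perm (Fin m))
    (H : ∀ i j : Fin m, wlt u i j ↔ τ i < τ j) (i : Fin m) : rk u i = τ i := by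
  rw [rk_eq_card, hlen,
    show ((τ i : ℕ)) = (Finset.range (τ i)).card from (Finset.card_range _).symm]
  refine Finset.card_bij' (fun j hj => (τ ⟨j, Finset.mem_range.1 (Finset.mem_filter.1 hj).1⟩ : ℕ))
    (fun k hk => ((τ.symm ⟨k, lt_trans (Finset.mem_range.1 hk) (τ i).isLt⟩ : Fin m) : ℕ))
    ?_ ?_ ?_ ?_
  · intro j hj
    rw [Finset.mem_range, ← Fin.lt_def]
    exact (H _ i).1 (Finset.mem_filter.1 hj).2
  · intro k hk
    rw [Finset.mem_filter, Finset.mem_range]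
    refine ⟨(τ.symm _).isLt, (H _ i).2 ?_⟩
    simp only [Fin.eta, Equiv.apply_symm_apply]
    exact Fin.lt_def.2 (Finset.mem_range.1 hk)
  · intro j hj
    simp
  · intro k hk
    simp


/-- the standardization permutation of a word -/

noncomputable def rkPerm (u : List ℕ) : Equiv.Perm (Fin u.length) :=
  Equiv.ofBijective (fun i => ⟨rk u i, rk_lt_length i.isLt⟩)
    ((Finite.injective_iff_bijective).1 (by
      intro a b hab
      by_contra hne
      have hab' : rk u a = rk u b := congrArg Fin.val hab
      have : (a : ℕ) ≠ b := fun h => hne (Fin.ext h)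
      rcases wlt_total (u := u) this with h | h
      · have := (wlt_iff_rk_lt a.isLt b.isLt).1 h
        omega
      · have := (wlt_iff_rk_lt b.isLt a.isLt).1 h
        omega))


lemma rkPerm_apply (u : List ℕ) (i : Fin u.length) : (rkPerm u i : ℕ) = rk u i := rfl


lemma stdWord_eq_wordOf_rkPerm (u : List ℕ) : stdWord u = wordOf (rkPerm u) :=
  (stdWord_eq_wordOf_iff _).2 ⟨rfl, fun _ => rfl⟩


lemma wordOf_injective {n : ℕ} {τ τ' : Equiv.Perm (Fin n)} (h : wordOf τ = wordOf τ') :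
    τ = τ' := by
  ext i
  have := congrArg (fun l => l.getD i 0) h
  simp only [wordOf] at this
  rw [List.getD_eq_getElem _ _ (by simp [i.isLt]),
    List.getD_eq_getElem _ _ (by simp [i.isLt])] at this
  simpa using this



lemma filter_wordOf_eq {n r : ℕ} (ν : Equiv.Perm (Fin n)) (e : Fin r → Fin n)
    (Q : ℕ → Bool) (hQ : ∀ x : Fin n, Q ((x : ℕ) + 1) = true ↔ ∃ i, e i = x)
    (ρ : Equiv.Perm (Fin r)) :
    (wordOf ν).filter (fun a => Q a) =
        (List.finRange r).map (fun t => ((e (ρ t) : ℕ) + 1)) ↔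
      StrictMono (fun t => ν.symm (e (ρ t))) := by
  classical
  set L : List (Fin n) := (List.finRange n).filter (fun k => Q ((ν k : ℕ) + 1)) with hL
  have stepa : (wordOf ν).filter (fun a => Q a) = L.map (fun k => (ν k : ℕ) + 1) := by
    rw [wordOf, List.ofFn_eq_map, List.filter_map]
    rfl
  have hLsorted : L.Pairwise (· < ·) := (List.pairwise_lt_finRange n).filter _
  have hLmem : ∀ k : Fin n, k ∈ L ↔ ∃ i, e i = ν k := by
    intro k
    rw [hL, List.mem_filter]
    simp [hQ (ν k)]
  constructor
  · intro h
    rw [stepa] at h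
    have hlen : L.length = r := by
      have := congrArg List.length h
      simpa using this
    have hget : ∀ t : Fin r, ν.symm (e (ρ t)) = L.get ⟨t, by omega⟩ := by
      intro t
      have h1 := congrArg (fun l => l.getD t 0) h
      rw [List.getD_eq_getElem _ _ (by simp [hlen, t.isLt]),
          List.getD_eq_getElem _ _ (by simp [t.isLt])] at h1
      simp only [List.getElem_map, List.getElem_finRange] at h1
      have h2 : ν (L.get ⟨t, by omega⟩) = e (ρ t) := by
        apply Fin.ext
        have hc : (Fin.cast (List.length_finRange (n := r)) ⟨(t : ℕ), by simp [t.isLt]⟩ : Fin r) = t := by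
          apply Fin.ext; simp
        rw [hc] at h1
        simpa [List.get_eq_getElem] using h1
      rw [← h2, Equiv.symm_apply_apply]
    intro a b hab
    dsimp only
    rw [hget a, hget b]
    exact (List.Pairwise.sortedLT hLsorted).strictMono_get (by simpa using hab)
  · intro hS
    have key : L = (List.finRange r).map (fun t => ν.symm (e (ρ t))) := by
      have hnd1 : L.Nodup := hLsorted.nodup
      have hnd2 : ((List.finRange r).map (fun t => ν.symm (e (ρ t)))).Nodup :=
        List.Nodup.map hS.injective (List.nodup_finRange r)
      refine List.Perm.eq_of_pairwise' hLsorted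
        (List.pairwise_map.2 ((List.pairwise_lt_finRange r).imp fun h => hS h))
        ((List.perm_ext_iff_of_nodup hnd1 hnd2).2 ?_)
      intro k
      rw [hLmem k, List.mem_map]
      constructor
      · rintro ⟨i, hi⟩
        exact ⟨ρ.symm i, List.mem_finRange _, by simp [hi]⟩
      · rintro ⟨t, -, ht⟩
        refine ⟨ρ t, ?_⟩
        rw [← ht, Equiv.apply_symm_apply]
    rw [stepa, key, List.map_map]
    apply List.map_congr_left
    intro t _
    simp [Function.comp, Equiv.apply_symm_apply]


lemma strictMono_comp_iff {r n : ℕ} (ρ : Equiv.Perm (Fin r)) (g : Fin r → Fin n) :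
    StrictMono (fun t => g (ρ t)) ↔ ∀ i j : Fin r, ρ⁻¹ i < ρ⁻¹ j ↔ g i < g j := by
  simp only [Equiv.Perm.inv_def]
  constructor
  · intro hS i j
    have := hS.lt_iff_lt (a := ρ.symm i) (b := ρ.symm j)
    simp only [Equiv.apply_symm_apply] at this
    exact this.symm
  · intro H a b hab
    dsimp only
    have := H (ρ a) (ρ b)
    simpa using this.1 (by simpa using hab)


lemma mem_shuffle_iff {p q : ℕ} (σ : Equiv.Perm (Fin p)) (μ : Equiv.Perm (Fin q))
    (ν : Equiv.Perm (Fin (p + q))) :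
    InShiftedShuffle p q σ μ ν ↔
      ((∀ i j : Fin p, σ⁻¹ i < σ⁻¹ j ↔ ν⁻¹ (Fin.castAdd q i) < ν⁻¹ (Fin.castAdd q j)) ∧
       (∀ i j : Fin q, μ⁻¹ i < μ⁻¹ j ↔ ν⁻¹ (Fin.natAdd p i) < ν⁻¹ (Fin.natAdd p j))) := by
  have h1 : wordOf σ = (List.finRange p).map (fun t => ((Fin.castAdd q (σ t) : ℕ) + 1)) := by
    rw [wordOf, List.ofFn_eq_map]
    simp
  have h2 : (wordOf μ).map (· + p) =
      (List.finRange q).map (fun t => ((Fin.natAdd p (μ t) : ℕ) + 1)) := by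
    rw [wordOf, List.ofFn_eq_map, List.map_map]
    apply List.map_congr_left
    intro t _
    simp [Function.comp, Fin.val_add_one]
    omega
  have hQ1 : ∀ x : Fin (p + q), (decide ((x : ℕ) + 1 ≤ p)) = true ↔
      ∃ i : Fin p, Fin.castAdd q i = x := by
    intro x
    simp only [decide_eq_true_eq]
    constructor
    · intro h
      exact ⟨⟨x, by omega⟩, Fin.ext rfl⟩
    · rintro ⟨i, rfl⟩
      have := i.isLt
      simp only [Fin.coe_castAdd]
      omega
  have hQ2 : ∀ x : Fin (p + q), (decide (p < (x : ℕ) + 1)) = true ↔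
      ∃ i : Fin q, Fin.natAdd p i = x := by
    intro x
    simp only [decide_eq_true_eq]
    constructor
    · intro h
      exact ⟨⟨x - p, by omega⟩, Fin.ext (by simp; omega)⟩
    · rintro ⟨i, rfl⟩
      simp only [Fin.coe_natAdd]
      omega
  rw [InShiftedShuffle, h1, h2,
    filter_wordOf_eq ν (Fin.castAdd q) _ hQ1 σ,
    filter_wordOf_eq ν (Fin.natAdd p) _ hQ2 μ]
  exact and_congr
    (strictMono_comp_iff σ (fun x => ν.symm (Fin.castAdd q x)))
    (strictMono_comp_iff μ (fun x => ν.symm (Fin.natAdd p x)))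


section part2

variable {p q : ℕ} (σ : Equiv.Perm (Fin p)) (μ : Equiv.Perm (Fin q))


lemma cpinv_cast (i : Fin p) :
    (concatPerm p q σ μ)⁻¹ (Fin.castAdd q i) = Fin.castAdd q (σ⁻¹ i) := by
  simp [concatPerm, Equiv.Perm.inv_def, Equiv.symm_trans_apply]


lemma cpinv_nat (j : Fin q) :
    (concatPerm p q σ μ)⁻¹ (Fin.natAdd p j) = Fin.natAdd p (μ⁻¹ j) := by
  simp [concatPerm, Equiv.Perm.inv_def, Equiv.symm_trans_apply]


lemma cp'inv_cast (i : Fin p) :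
    ((concatPerm' p q σ μ)⁻¹ (Fin.castAdd q i) : ℕ) = q + (σ⁻¹ i : ℕ) := by
  simp [concatPerm', Equiv.Perm.inv_def, Equiv.symm_trans_apply]
  omega


lemma cp'inv_nat (j : Fin q) :
    ((concatPerm' p q σ μ)⁻¹ (Fin.natAdd p j) : ℕ) = ((μ⁻¹ j : Fin q) : ℕ) := by
  simp [concatPerm', Equiv.Perm.inv_def, Equiv.symm_trans_apply]


lemma decompFin (x : Fin (p + q)) :
    (∃ i : Fin p, x = Fin.castAdd q i) ∨ (∃ j : Fin q, x = Fin.natAdd p j) := by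
  rcases lt_or_ge (x : ℕ) p with h | h
  · exact Or.inl ⟨⟨x, h⟩, Fin.ext rfl⟩
  · exact Or.inr ⟨⟨x - p, by omega⟩, Fin.ext (by simp [Fin.coe_natAdd]; omega)⟩


lemma cc_lt {i j : Fin p} : Fin.castAdd q i < Fin.castAdd q j ↔ i < j := by
  simp only [Fin.lt_def, Fin.coe_castAdd]


lemma nn_lt {i j : Fin q} : Fin.natAdd p i < Fin.natAdd p j ↔ i < j := by
  simp only [Fin.lt_def, Fin.coe_natAdd]
  omega


lemma cn_lt (i : Fin p) (j : Fin q) : Fin.castAdd q i < Fin.natAdd p j := by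
  have := i.isLt
  simp only [Fin.lt_def, Fin.coe_castAdd, Fin.coe_natAdd]
  omega

end part2


lemma interval_iff {p q : ℕ} (σ : Equiv.Perm (Fin p)) (μ : Equiv.Perm (Fin q))
    (ν : Equiv.Perm (Fin (p + q))) :
    InShiftedShuffle p q σ μ ν ↔
      (coinvSet (concatPerm p q σ μ) ⊆ coinvSet ν ∧
       coinvSet ν ⊆ coinvSet (concatPerm' p q σ μ)) := by
  rw [mem_shuffle_iff]
  constructor
  · rintro ⟨A, B⟩
    constructor
    · rintro ⟨x, y⟩ ⟨hxy, hinv⟩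
      rcases decompFin x with ⟨i, rfl⟩ | ⟨i, rfl⟩ <;>
        rcases decompFin y with ⟨j, rfl⟩ | ⟨j, rfl⟩
      · rw [cpinv_cast, cpinv_cast, cc_lt] at hinv
        exact ⟨hxy, (A j i).1 hinv⟩
      · rw [cpinv_cast, cpinv_nat] at hinv
        exact absurd hinv (not_lt.2 (le_of_lt (cn_lt _ _)))
      · exact absurd hxy (not_lt.2 (le_of_lt (cn_lt _ _)))
      · rw [cpinv_nat, cpinv_nat, nn_lt] at hinv
        exact ⟨hxy, (B j i).1 hinv⟩
    · rintro ⟨x, y⟩ ⟨hxy, hinv⟩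
      rcases decompFin x with ⟨i, rfl⟩ | ⟨i, rfl⟩ <;>
        rcases decompFin y with ⟨j, rfl⟩ | ⟨j, rfl⟩
      · refine ⟨hxy, ?_⟩
        rw [Fin.lt_def, cp'inv_cast, cp'inv_cast]
        have h := Fin.lt_def.1 ((A j i).2 hinv)
        omega
      · refine ⟨hxy, ?_⟩
        rw [Fin.lt_def, cp'inv_nat, cp'inv_cast]
        have := (μ⁻¹ j).isLt
        omega
      · exact absurd hxy (not_lt.2 (le_of_lt (cn_lt _ _)))
      · refine ⟨hxy, ?_⟩
        rw [Fin.lt_def, cp'inv_nat, cp'inv_nat]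
        have h := Fin.lt_def.1 ((B j i).2 hinv)
        omega
  · rintro ⟨h1, h2⟩
    constructor
    · have key : ∀ i j : Fin p, σ⁻¹ i < σ⁻¹ j →
          ν⁻¹ (Fin.castAdd q i) < ν⁻¹ (Fin.castAdd q j) := by
        intro i j hσ
        rcases lt_trichotomy i j with hij | rfl | hij
        · by_contra hcon
          have hne : ν⁻¹ (Fin.castAdd q j) ≠ ν⁻¹ (Fin.castAdd q i) := by
            intro hh
            have h3 : (Fin.castAdd q j) = Fin.castAdd q i := (Equiv.injective _) hh
            have h4 : (j : ℕ) = (i : ℕ) := congrArg (Fin.val : Fin (p+q) → ℕ) h3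
            have : j = i := Fin.ext h4
            omega
          have hlt : ν⁻¹ (Fin.castAdd q j) < ν⁻¹ (Fin.castAdd q i) :=
            (not_lt.1 hcon).lt_of_ne hne
          have hmem : ((Fin.castAdd q i, Fin.castAdd q j) :
              Fin (p+q) × Fin (p+q)) ∈ coinvSet ν := ⟨cc_lt.2 hij, hlt⟩
          obtain ⟨-, hcp⟩ := h2 hmem
          rw [Fin.lt_def, cp'inv_cast, cp'inv_cast] at hcp
          have := Fin.lt_def.1 hσ
          omega
        · exact absurd hσ (lt_irrefl _)
        · have hmem : ((Fin.castAdd q j, Fin.castAdd q i) :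
              Fin (p+q) × Fin (p+q)) ∈ coinvSet (concatPerm p q σ μ) := by
            refine ⟨cc_lt.2 hij, ?_⟩
            rw [cpinv_cast, cpinv_cast, cc_lt]
            exact hσ
          exact (h1 hmem).2
      intro i j
      refine ⟨key i j, fun hν => ?_⟩
      rcases lt_trichotomy (σ⁻¹ i) (σ⁻¹ j) with h | h | h
      · exact h
      · have : i = j := (Equiv.injective _) h
        subst this
        exact absurd hν (lt_irrefl _)
      · exact absurd hν (asymm (key j i h))
    · have key : ∀ i j : Fin q, μ⁻¹ i < μ⁻¹ j →
          ν⁻¹ (Fin.natAdd p i) < ν⁻¹ (Fin.natAdd p j) := by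
        intro i j hμ
        rcases lt_trichotomy i j with hij | rfl | hij
        · by_contra hcon
          have hne : ν⁻¹ (Fin.natAdd p j) ≠ ν⁻¹ (Fin.natAdd p i) := by
            intro hh
            have h3 : (Fin.natAdd p j) = Fin.natAdd p i := (Equiv.injective _) hh
            have h4 : p + (j : ℕ) = p + i := congrArg (Fin.val : Fin (p+q) → ℕ) h3
            have : j = i := Fin.ext (by omega)
            omega
          have hlt : ν⁻¹ (Fin.natAdd p j) < ν⁻¹ (Fin.natAdd p i) :=
            (not_lt.1 hcon).lt_of_ne hne
          have hmem : ((Fin.natAdd p i, Fin.natAdd p j) :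
              Fin (p+q) × Fin (p+q)) ∈ coinvSet ν := ⟨nn_lt.2 hij, hlt⟩
          obtain ⟨-, hcp⟩ := h2 hmem
          rw [Fin.lt_def, cp'inv_nat, cp'inv_nat] at hcp
          have := Fin.lt_def.1 hμ
          omega
        · exact absurd hμ (lt_irrefl _)
        · have hmem : ((Fin.natAdd p j, Fin.natAdd p i) :
              Fin (p+q) × Fin (p+q)) ∈ coinvSet (concatPerm p q σ μ) := by
            refine ⟨nn_lt.2 hij, ?_⟩
            rw [cpinv_nat, cpinv_nat, nn_lt]
            exact hμ
          exact (h1 hmem).2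
      intro i j
      refine ⟨key i j, fun hν => ?_⟩
      rcases lt_trichotomy (μ⁻¹ i) (μ⁻¹ j) with h | h | h
      · exact h
      · have : i = j := (Equiv.injective _) h
        subst this
        exact absurd hν (lt_irrefl _)
      · exact absurd hν (asymm (key j i h))


lemma length_stdWord (u : List ℕ) : (stdWord u).length = u.length := by
  simp [stdWord_def]


lemma length_wordOf {n : ℕ} (τ : Equiv.Perm (Fin n)) : (wordOf τ).length = n := by
  simp [wordOf]


lemma Ffun_length {n : ℕ} (σ : Equiv.Perm (Fin n)) (u : List ℕ) (h : Ffun σ u ≠ 0) :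
    u.length = n := by
  rw [Ffun] at h
  split at h
  · rename_i hc
    have := congrArg List.length hc
    rwa [length_stdWord, length_wordOf] at this
  · simp at h


lemma wlt_take {w : List ℕ} {m i j : ℕ} (hi : i < m) (hj : j < m) (hm : m ≤ w.length) :
    wlt (w.take m) i j ↔ wlt w i j := by
  have hl : (w.take m).length = m := by simp; omega
  have e1 : (w.take m).getD i 0 = w.getD i 0 := by
    rw [List.getD_eq_getElem _ _ (by omega), List.getD_eq_getElem _ _ (by omega),
      List.getElem_take]
  have e2 : (w.take m).getD j 0 = w.getD j 0 := by
    rw [List.getD_eq_getElem (w.take m) 0 (by omega), List.getElem_take]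
    exact (List.getD_eq_getElem w 0 (by omega)).symm
  unfold wlt
  rw [e1, e2]


lemma wlt_drop {w : List ℕ} {m i j : ℕ} (hi : i < w.length - m) (hj : j < w.length - m) :
    wlt (w.drop m) i j ↔ wlt w (m + i) (m + j) := by
  have hl : (w.drop m).length = w.length - m := by simp
  have e1 : (w.drop m).getD i 0 = w.getD (m + i) 0 := by
    rw [List.getD_eq_getElem _ _ (by omega), List.getD_eq_getElem _ _ (by omega),
      List.getElem_drop]
  have e2 : (w.drop m).getD j 0 = w.getD (m + j) 0 := by
    rw [List.getD_eq_getElem (w.drop m) 0 (by omega), List.getElem_drop]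
    exact (List.getD_eq_getElem w 0 (by omega)).symm
  unfold wlt
  rw [e1, e2]
  omega


lemma std_eq_iff_order {u : List ℕ} {m : ℕ} (τ : Equiv.Perm (Fin m)) (hlen : u.length = m) :
    stdWord u = wordOf τ ↔ ∀ i j : Fin m, wlt u i j ↔ τ i < τ j := by
  rw [stdWord_eq_wordOf_iff]
  constructor
  · rintro ⟨-, h⟩ i j
    rw [wlt_iff_rk_lt (by omega) (by omega), h i, h j, Fin.lt_def]
  · intro H
    exact ⟨hlen, rk_eq_of_order hlen τ H⟩


open scoped Classical in
/-- In FQSym, `F_σ · F_μ = Σ_ν F_ν` summed over the shifted shuffle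
of `σ` and `μ`, and this set of permutations is the interval `[σ·μ⃗, μ⃗·σ]` of the
right weak order. -/
theorem fqsym_product_interval (p q : ℕ)
    (σ : Equiv.Perm (Fin p)) (μ : Equiv.Perm (Fin q)) :
    (∀ w : List ℕ,
      conv (Ffun σ) (Ffun μ) w =
        ∑ ν ∈ Finset.univ.filter
            (fun ν : Equiv.Perm (Fin (p + q)) => InShiftedShuffle p q σ μ ν),
          Ffun ν w) ∧
    (∀ ν : Equiv.Perm (Fin (p + q)),
      InShiftedShuffle p q σ μ ν ↔
        (coinvSet (concatPerm p q σ μ) ⊆ coinvSet ν ∧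
         coinvSet ν ⊆ coinvSet (concatPerm' p q σ μ))) := by
  constructor
  · intro w
    by_cases hlen : w.length = p + q
    · set e : Fin w.length ≃ Fin (p + q) := finCongr hlen with he
      set ν₀ : Equiv.Perm (Fin (p + q)) := (e.permCongr (rkPerm w))⁻¹ with hν₀
      have hval : ∀ x : Fin (p + q), (ν₀⁻¹ x : ℕ) = rk w x := by
        intro x
        rw [hν₀, inv_inv]
        simp only [Equiv.permCongr_apply, he, finCongr_apply, Fin.coe_cast]
        rw [rkPerm_apply]
        simp
      have hstd : stdWord w = wordOf ν₀⁻¹ := by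
        rw [stdWord_eq_wordOf_iff]
        exact ⟨hlen, fun i => (hval i).symm⟩
      have huniq : ∀ ν : Equiv.Perm (Fin (p + q)), stdWord w = wordOf ν⁻¹ → ν = ν₀ := by
        intro ν h
        exact inv_injective (wordOf_injective (h.symm.trans hstd))
      have hto : ∀ x y : Fin (p + q), ν₀⁻¹ x < ν₀⁻¹ y ↔ wlt w x y := by
        intro x y
        have hx := x.isLt
        have hy := y.isLt
        rw [Fin.lt_def, hval x, hval y, ← wlt_iff_rk_lt (by omega) (by omega)]
      rw [conv, Finset.sum_eq_single_of_mem p (by rw [Finset.mem_range]; omega) (fun b hb hbp => by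
        rcases eq_or_ne (Ffun σ (w.take b)) 0 with h0 | h0
        · rw [h0, zero_mul]
        · exfalso
          have hlt := Ffun_length σ _ h0
          rw [List.length_take] at hlt
          have hb' := Finset.mem_range.1 hb
          omega)]
      have RHS : (∑ ν ∈ Finset.univ.filter
            (fun ν : Equiv.Perm (Fin (p + q)) => InShiftedShuffle p q σ μ ν), Ffun ν w)
          = if InShiftedShuffle p q σ μ ν₀ then 1 else 0 := by
        by_cases hin : InShiftedShuffle p q σ μ ν₀
        · rw [if_pos hin,
            Finset.sum_eq_single_of_mem ν₀ (Finset.mem_filter.2 ⟨Finset.mem_univ _, hin⟩)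
              (fun b _ hb => by rw [Ffun, if_neg (fun hc => hb (huniq b hc))]),
            Ffun, if_pos hstd]
        · rw [if_neg hin, Finset.sum_eq_zero]
          intro ν hν
          rw [Ffun, if_neg]
          intro hc
          exact hin ((huniq ν hc) ▸ (Finset.mem_filter.1 hν).2)
      rw [RHS]
      have E1 : stdWord (w.take p) = wordOf σ⁻¹ ↔
          ∀ i j : Fin p, σ⁻¹ i < σ⁻¹ j ↔
            ν₀⁻¹ (Fin.castAdd q i) < ν₀⁻¹ (Fin.castAdd q j) := by
        rw [std_eq_iff_order σ⁻¹ (by rw [List.length_take]; omega)]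
        constructor
        · intro H i j
          rw [hto, Fin.coe_castAdd, Fin.coe_castAdd,
            ← wlt_take i.isLt j.isLt (by omega)]
          exact (H i j).symm
        · intro H i j
          rw [wlt_take i.isLt j.isLt (by omega)]
          have h2 := (H i j).trans (hto _ _)
          rw [Fin.coe_castAdd, Fin.coe_castAdd] at h2
          exact h2.symm
      have E2 : stdWord (w.drop p) = wordOf μ⁻¹ ↔
          ∀ i j : Fin q, μ⁻¹ i < μ⁻¹ j ↔
            ν₀⁻¹ (Fin.natAdd p i) < ν₀⁻¹ (Fin.natAdd p j) := by
        rw [std_eq_iff_order μ⁻¹ (by rw [List.length_drop]; omega)]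
        constructor
        · intro H i j
          have hi := i.isLt
          have hj := j.isLt
          rw [hto, Fin.coe_natAdd, Fin.coe_natAdd, ← wlt_drop (by omega) (by omega)]
          exact (H i j).symm
        · intro H i j
          have hi := i.isLt
          have hj := j.isLt
          rw [wlt_drop (by omega) (by omega)]
          have h2 := (H i j).trans (hto _ _)
          rw [Fin.coe_natAdd, Fin.coe_natAdd] at h2
          exact h2.symm
      rw [mem_shuffle_iff, Ffun, Ffun]
      by_cases hA : stdWord (w.take p) = wordOf σ⁻¹ <;>
        by_cases hB : stdWord (w.drop p) = wordOf μ⁻¹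
      · rw [if_pos hA, if_pos hB, if_pos ⟨E1.1 hA, E2.1 hB⟩]
        norm_num
      · rw [if_pos hA, if_neg hB, if_neg (fun hcon => hB (E2.2 hcon.2))]
        norm_num
      · rw [if_neg hA, if_pos hB, if_neg (fun hcon => hA (E1.2 hcon.1))]
        norm_num
      · rw [if_neg hA, if_neg hB, if_neg (fun hcon => hA (E1.2 hcon.1))]
        norm_num
    · rw [Finset.sum_eq_zero (fun ν _ => ?_), conv, Finset.sum_eq_zero (fun k hk => ?_)]
      · rcases eq_or_ne (Ffun σ (w.take k)) 0 with h0 | h0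
        · rw [h0, zero_mul]
        rcases eq_or_ne (Ffun μ (w.drop k)) 0 with h1 | h1
        · rw [h1, mul_zero]
        exfalso
        have l1 := Ffun_length σ _ h0
        have l2 := Ffun_length μ _ h1
        rw [List.length_take] at l1
        rw [List.length_drop] at l2
        have := Finset.mem_range.1 hk
        omega
      · rw [Ffun, if_neg]
        intro hc
        have := congrArg List.length hc
        rw [length_stdWord, length_wordOf] at this
        exact hlen this
  · exact fun ν => interval_iff σ μ ν
end
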